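/- arXiv:2506.17197 — 6 statements merged into one kernel-verified Lean document; each statement's English description precedes it below -/
import Mathlib

section
/- Let X and Y be standard Borel spaces, let κ be a Markov kernel from X to Y, and let P be a probability measure on X × Y with first marginal P_X. Then for every probability measure π on X, KL(P ‖ P_X ⊗ κ) ≤ KL(P ‖ π ⊗ κ); that is, among all measures of the form π ⊗ κ with π a probability measure on X, the Kullback–Leibler divergence from P is minimised at π = P_X. -/
open MeasureTheory ProbabilityTheory Classical

open scoped ENNReal

/-- Kullback-Leibler divergence between two measures, valued in `[0, ∞]`:
`KL(μ‖ν) = ∫ log(dμ/dν) dμ` when `μ ≪ ν` and the log-likelihood ratio is `μ`-integrable,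
and `+∞` otherwise. -/

noncomputable def KL {α : Type*} [MeasurableSpace α] (μ ν : Measure α) : ℝ≥0∞ :=
  if μ ≪ ν ∧ Integrable (llr μ ν) μ then ENNReal.ofReal (∫ x, llr μ ν x ∂μ) else ∞

/-- Composition-product with a density: `(ν.withDensity g) ⊗ₘ κ` has density `g ∘ fst`
with respect to `ν ⊗ₘ κ`. -/
lemma compProd_withDensity_aux {X Y : Type*} [MeasurableSpace X] [MeasurableSpace Y]
    (ν : Measure X) [SFinite ν] (κ : Kernel X Y) [IsSFiniteKernel κ]
    {g : X → ℝ≥0∞} (hg : Measurable g) :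
    (ν.withDensity g) ⊗ₘ κ = (ν ⊗ₘ κ).withDensity (fun z => g z.1) := by
  ext s hs
  rw [Measure.compProd_apply hs, withDensity_apply _ hs,
    lintegral_withDensity_eq_lintegral_mul _ hg (Kernel.measurable_kernel_prodMk_left hs),
    ← lintegral_indicator hs (fun z => g z.1),
    Measure.lintegral_compProd (show Measurable (s.indicator fun z : X × Y => g z.1) from (hg.comp measurable_fst).indicator hs)]
  refine lintegral_congr fun x => ?_
  have : ∀ y, s.indicator (fun z : X × Y => g z.1) (x, y)
      = (Prod.mk x ⁻¹' s).indicator (fun _ => g x) y := by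
    intro y
    by_cases hy : (x, y) ∈ s <;> simp [Set.indicator, hy]
  simp_rw [this]
  rw [lintegral_indicator (measurable_prodMk_left hs) (fun _ => g x), setLIntegral_const]
  rfl

/-- The negative part of a log-likelihood ratio is integrable. -/
lemma integrable_llr_negpart {α : Type*} [MeasurableSpace α] {μ ν : Measure α}
    [IsFiniteMeasure μ] [IsFiniteMeasure ν] (hμν : μ ≪ ν) :
    Integrable (fun x => max (- llr μ ν x) 0) μ := by
  have hint : Integrable (fun x => Real.exp (- llr μ ν x)) μ :=
    Measure.integrable_toReal_rnDeriv.congr (exp_neg_llr hμν).symm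
  refine hint.mono ?_ (ae_of_all _ fun x => ?_)
  · exact ((measurable_llr _ _).neg.max measurable_const).aestronglyMeasurable
  · rw [Real.norm_eq_abs, Real.norm_eq_abs, abs_of_nonneg (le_max_right _ _),
      abs_of_nonneg (Real.exp_pos _).le]
    refine max_le ?_ (Real.exp_pos _).le
    linarith [Real.add_one_le_exp (- llr μ ν x)]

/-- Gibbs' inequality: the KL divergence integral is nonnegative. -/
lemma integral_llr_nonneg_aux {α : Type*} [MeasurableSpace α] {μ ν : Measure α}
    [IsProbabilityMeasure μ] [IsProbabilityMeasure ν] (hμν : μ ≪ ν)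
    (h_int : Integrable (llr μ ν) μ) :
    0 ≤ ∫ x, llr μ ν x ∂μ := by
  have hexp : Integrable (fun x => Real.exp (- llr μ ν x)) μ :=
    Measure.integrable_toReal_rnDeriv.congr (exp_neg_llr hμν).symm
  have h1 : ∫ x, Real.exp (- llr μ ν x) ∂μ ≤ 1 := by
    rw [integral_congr_ae (exp_neg_llr hμν)]
    calc ∫ x, (ν.rnDeriv μ x).toReal ∂μ ≤ (ν Set.univ).toReal := by
          rw [← setIntegral_univ]
          exact Measure.setIntegral_toReal_rnDeriv_le (measure_ne_top ν _)
      _ = 1 := by simp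
  have h2 : ∫ x, - llr μ ν x ∂μ ≤ ∫ x, (Real.exp (- llr μ ν x) - 1) ∂μ := by
    refine integral_mono h_int.neg (hexp.sub (integrable_const 1)) fun x => ?_
    have := Real.add_one_le_exp (- llr μ ν x)
    simp only [Pi.neg_apply]
    linarith
  rw [integral_sub hexp (integrable_const 1), integral_neg] at *
  simp only [integral_const, measure_univ, probReal_univ, ENNReal.toReal_one, smul_eq_mul, one_mul] at h2
  linarith

/-- Among all measures of the form `π ⊗ₘ κ` with `π` a probability measure on `X`,
the KL divergence from `P` is minimised at the first marginal `π = P.fst`. -/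
theorem kl_compProd_fst_le {X Y : Type*} [MeasurableSpace X] [MeasurableSpace Y]
    [StandardBorelSpace X] [StandardBorelSpace Y]
    (κ : Kernel X Y) [IsMarkovKernel κ]
    (P : Measure (X × Y)) [IsProbabilityMeasure P]
    (π : Measure X) [IsProbabilityMeasure π] :
    KL P (P.fst ⊗ₘ κ) ≤ KL P (π ⊗ₘ κ) := by
  by_cases hRHS : P ≪ π ⊗ₘ κ ∧ Integrable (llr P (π ⊗ₘ κ)) P
  swap
  · have : KL P (π ⊗ₘ κ) = ∞ := by rw [KL, if_neg hRHS]
    rw [this]; exact le_top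
  obtain ⟨hP, hint⟩ := hRHS
  set g : X → ℝ≥0∞ := P.fst.rnDeriv π with hg_def
  have hg : Measurable g := Measure.measurable_rnDeriv _ _
  -- marginal absolute continuity
  have h1 : P.fst ≪ π := by
    have := hP.map (measurable_fst (α := X) (β := Y))
    rwa [show (π ⊗ₘ κ).map Prod.fst = π from Measure.fst_compProd π κ] at this
  -- the density identity
  have hEq : P.fst ⊗ₘ κ = (π ⊗ₘ κ).withDensity (fun z => g z.1) := by
    conv_lhs => rw [← Measure.withDensity_rnDeriv_eq _ _ h1]
    exact compProd_withDensity_aux π κ hg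
  -- positivity of g along P
  have hg_pos : ∀ᵐ z ∂P, 0 < g z.1 := by
    have h := Measure.rnDeriv_pos h1
    exact ae_of_ae_map (p := fun x => 0 < g x) measurable_fst.aemeasurable h
  -- finiteness of g along P
  have hg_lt_top : ∀ᵐ z ∂P, g z.1 < ∞ := by
    refine hP.ae_le ?_
    have h : ∀ᵐ x ∂π, g x < ∞ := Measure.rnDeriv_lt_top _ _
    refine ae_of_ae_map (p := fun x => g x < ∞) measurable_fst.aemeasurable ?_
    rwa [show (π ⊗ₘ κ).map Prod.fst = π from Measure.fst_compProd π κ]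
  -- P is absolutely continuous w.r.t. P.fst ⊗ₘ κ
  have hPac : P ≪ P.fst ⊗ₘ κ := by
    refine Measure.AbsolutelyContinuous.mk fun s hs hs0 => ?_
    rw [hEq, withDensity_apply _ hs] at hs0
    have h0 : ∀ᵐ z ∂(π ⊗ₘ κ), z ∈ s → g z.1 = 0 :=
      (setLIntegral_eq_zero_iff hs (hg.comp measurable_fst)).mp hs0
    have h0P : ∀ᵐ z ∂P, z ∈ s → g z.1 = 0 := hP.ae_le h0
    have : ∀ᵐ z ∂P, z ∉ s := by
      filter_upwards [h0P, hg_pos] with z hz hz_pos hzs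
      exact hz_pos.ne' (hz hzs)
    simpa [ae_iff, hs] using this
  have hrn : (P.fst ⊗ₘ κ).rnDeriv (π ⊗ₘ κ) =ᵐ[π ⊗ₘ κ] fun z => g z.1 := by
    rw [hEq]
    exact Measure.rnDeriv_withDensity _ (hg.comp measurable_fst)
  -- chain rule for rnDeriv, a.e. with respect to P
  have hchain : ∀ᵐ z ∂P,
      P.rnDeriv (π ⊗ₘ κ) z = P.rnDeriv (P.fst ⊗ₘ κ) z * g z.1 := by
    have h := Measure.rnDeriv_mul_rnDeriv (κ := π ⊗ₘ κ) hPac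
    filter_upwards [hP.ae_le h, hP.ae_le hrn] with z hz hz'
    rw [← hz, Pi.mul_apply, hz']
  -- decomposition of the llr
  have hu_pos : ∀ᵐ z ∂P, 0 < P.rnDeriv (P.fst ⊗ₘ κ) z := Measure.rnDeriv_pos hPac
  have hu_lt_top : ∀ᵐ z ∂P, P.rnDeriv (P.fst ⊗ₘ κ) z < ∞ :=
    hPac.ae_le (Measure.rnDeriv_lt_top _ _)
  have hdecomp : llr P (π ⊗ₘ κ)
      =ᵐ[P] fun z => llr P (P.fst ⊗ₘ κ) z + llr P.fst π z.1 := by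
    filter_upwards [hchain, hu_pos, hu_lt_top, hg_pos, hg_lt_top]
      with z hz hz1 hz2 hz3 hz4
    rw [llr, hz, ENNReal.toReal_mul, Real.log_mul, llr, llr]
    · exact (ENNReal.toReal_pos hz1.ne' hz2.ne).ne'
    · exact (ENNReal.toReal_pos hz3.ne' hz4.ne).ne'
  -- integrability pieces
  have hv_meas : Measurable fun z : X × Y => llr P.fst π z.1 :=
    (measurable_llr _ _).comp measurable_fst
  have hu_negpart : Integrable (fun z => max (- llr P (P.fst ⊗ₘ κ) z) 0) P :=
    integrable_llr_negpart hPac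
  have hv_negpart : Integrable (fun z : X × Y => max (- llr P.fst π z.1) 0) P := by
    have h := integrable_llr_negpart h1
    rw [show P.fst = P.map Prod.fst from rfl, integrable_map_measure
      (g := fun x => max (- llr (P.map Prod.fst) π x) 0)
      ((measurable_llr _ _).neg.max measurable_const).aestronglyMeasurable
      measurable_fst.aemeasurable] at h
    exact h
  have hv : Integrable (fun z : X × Y => llr P.fst π z.1) P := by
    refine Integrable.mono (g := fun z => |llr P (π ⊗ₘ κ) z|
        + max (- llr P (P.fst ⊗ₘ κ) z) 0 + max (- llr P.fst π z.1) 0)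
      ((hint.abs.add hu_negpart).add hv_negpart) hv_meas.aestronglyMeasurable ?_
    filter_upwards [hdecomp] with z hz
    have hb1 : (0:ℝ) ≤ max (- llr P (P.fst ⊗ₘ κ) z) 0 := le_max_right _ _
    have hb2 : (0:ℝ) ≤ max (- llr P.fst π z.1) 0 := le_max_right _ _
    rw [Real.norm_eq_abs, Real.norm_eq_abs,
      abs_of_nonneg (add_nonneg (add_nonneg (abs_nonneg _) hb1) hb2), abs_le]
    refine ⟨?_, ?_⟩
    · have h3 : - llr P.fst π z.1 ≤ max (- llr P.fst π z.1) 0 := le_max_left _ _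
      have h4 := abs_nonneg (llr P (π ⊗ₘ κ) z)
      linarith
    · have h2' := le_abs_self (llr P (π ⊗ₘ κ) z)
      have h3' : - llr P (P.fst ⊗ₘ κ) z ≤ max (- llr P (P.fst ⊗ₘ κ) z) 0 := le_max_left _ _
      linarith
  have hu : Integrable (llr P (P.fst ⊗ₘ κ)) P := by
    have : llr P (P.fst ⊗ₘ κ)
        =ᵐ[P] fun z => llr P (π ⊗ₘ κ) z - llr P.fst π z.1 := by
      filter_upwards [hdecomp] with z hz
      rw [hz]; ring
    exact (hint.sub hv).congr this.symm
  -- integral identities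
  have hint_eq : ∫ z, llr P (π ⊗ₘ κ) z ∂P
      = ∫ z, llr P (P.fst ⊗ₘ κ) z ∂P + ∫ z, llr P.fst π z.1 ∂P := by
    rw [← integral_add hu hv]
    exact integral_congr_ae hdecomp
  have hv_int_eq : ∫ z, llr P.fst π z.1 ∂P = ∫ x, llr P.fst π x ∂P.fst := by
    rw [show P.fst = P.map Prod.fst from rfl,
      integral_map measurable_fst.aemeasurable
        (stronglyMeasurable_llr _ _).aestronglyMeasurable]
  have hv_int' : Integrable (llr P.fst π) P.fst := by
    rw [show P.fst = P.map Prod.fst from rfl, integrable_map_measure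
      (stronglyMeasurable_llr _ _).aestronglyMeasurable measurable_fst.aemeasurable]
    exact hv
  have hgibbs : 0 ≤ ∫ x, llr P.fst π x ∂P.fst := integral_llr_nonneg_aux h1 hv_int'
  -- conclusion
  rw [KL, KL, if_pos ⟨hPac, hu⟩, if_pos ⟨hP, hint⟩]
  refine ENNReal.ofReal_le_ofReal ?_
  rw [hint_eq, hv_int_eq]
  linarith
end

section
/- Let X and Y be standard Borel spaces, let κ be a Markov kernel from X to Y, let P be a probability measure on X × Y with first marginal P_X, and let π be a probability measure on X. If KL(P ‖ π ⊗ κ) < ∞, then KL(P ‖ π ⊗ κ) = KL(P ‖ P_X ⊗ κ) + KL(P_X ⊗ κ ‖ π ⊗ κ), and moreover KL(P_X ⊗ κ ‖ π ⊗ κ) = KL(P_X ‖ π). -/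
open MeasureTheory ProbabilityTheory Classical

open scoped ENNReal

section Aux
set_option linter.unusedSectionVars false

variable {α : Type*} [MeasurableSpace α] {μ ν : Measure α}

lemma aux_inv_lintegral_le (hμν : μ ≪ ν) [SigmaFinite μ] [IsProbabilityMeasure ν] :
    ∫⁻ x, (μ.rnDeriv ν x)⁻¹ ∂μ ≤ 1 := by
  rw [← lintegral_rnDeriv_mul hμν (show Measurable fun x => (μ.rnDeriv ν x)⁻¹ from
    (Measure.measurable_rnDeriv μ ν).inv).aemeasurable]
  calc ∫⁻ x, μ.rnDeriv ν x * (μ.rnDeriv ν x)⁻¹ ∂ν ≤ ∫⁻ _, 1 ∂ν :=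
        lintegral_mono fun x => ENNReal.mul_inv_le_one _
    _ = 1 := by simp

lemma aux_inv_integrable (hμν : μ ≪ ν) [SigmaFinite μ] [IsProbabilityMeasure ν] :
    Integrable (fun x => ((μ.rnDeriv ν x)⁻¹).toReal) μ :=
  integrable_toReal_of_lintegral_ne_top (Measure.measurable_rnDeriv μ ν).inv.aemeasurable
    ((aux_inv_lintegral_le hμν).trans_lt ENNReal.one_lt_top).ne

lemma aux_inv_integral_le (hμν : μ ≪ ν) [SigmaFinite μ] [IsProbabilityMeasure ν] :
    ∫ x, ((μ.rnDeriv ν x)⁻¹).toReal ∂μ ≤ 1 := by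
  rw [integral_toReal (show Measurable fun x => (μ.rnDeriv ν x)⁻¹ from
    (Measure.measurable_rnDeriv μ ν).inv).aemeasurable ?_]
  · exact ENNReal.toReal_le_of_le_ofReal one_pos.le (by simpa using aux_inv_lintegral_le hμν)
  · filter_upwards [Measure.rnDeriv_pos hμν] with x hx
    simp [ENNReal.inv_lt_top, hx]

lemma aux_negpart_llr_integrable (hμν : μ ≪ ν) [SigmaFinite μ] [IsProbabilityMeasure ν] :
    Integrable (fun x => max (- llr μ ν x) 0) μ := by
  refine Integrable.mono' (aux_inv_integrable hμν)
    (((measurable_llr μ ν).neg.max measurable_const).aestronglyMeasurable) ?_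
  filter_upwards [Measure.rnDeriv_pos hμν, hμν.ae_le (Measure.rnDeriv_lt_top μ ν)]
    with x h0 htop
  have hd : 0 < (μ.rnDeriv ν x).toReal := ENNReal.toReal_pos h0.ne' htop.ne
  rw [Real.norm_eq_abs, abs_of_nonneg (le_max_right _ _), ENNReal.toReal_inv]
  refine max_le ?_ (by positivity)
  rw [llr_def, ← Real.log_inv]
  calc Real.log (μ.rnDeriv ν x).toReal⁻¹ ≤ (μ.rnDeriv ν x).toReal⁻¹ - 1 :=
        Real.log_le_sub_one_of_pos (by positivity)
    _ ≤ _ := by linarith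

lemma aux_integral_llr_nonneg (hμν : μ ≪ ν) [IsProbabilityMeasure μ] [IsProbabilityMeasure ν]
    (hint : Integrable (llr μ ν) μ) : 0 ≤ ∫ x, llr μ ν x ∂μ := by
  have hB := aux_inv_integrable hμν
  have hle : ∫ x, - llr μ ν x ∂μ ≤ ∫ x, (((μ.rnDeriv ν x)⁻¹).toReal - 1) ∂μ := by
    refine integral_mono_ae hint.neg (hB.sub (integrable_const 1)) ?_
    filter_upwards [Measure.rnDeriv_pos hμν, hμν.ae_le (Measure.rnDeriv_lt_top μ ν)]
      with x h0 htop
    have hd : 0 < (μ.rnDeriv ν x).toReal := ENNReal.toReal_pos h0.ne' htop.ne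
    rw [llr_def, ← Real.log_inv, ENNReal.toReal_inv]
    exact Real.log_le_sub_one_of_pos (by positivity)
  rw [integral_neg, integral_sub hB (integrable_const 1)] at hle
  simp only [integral_const, measureReal_def, measure_univ, ENNReal.toReal_one, smul_eq_mul, one_mul] at hle
  have := aux_inv_integral_le hμν
  linarith


variable {X Y : Type*} [MeasurableSpace X] [MeasurableSpace Y]
  {κ : Kernel X Y} {P : Measure (X × Y)} {π : Measure X}

lemma aux_indicator_eq (s : Set (X × Y)) (f : X × Y → ℝ≥0∞) (x : X) (y : Y) :
    s.indicator f (x, y) = (Prod.mk x ⁻¹' s).indicator (fun y => f (x, y)) y := by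
  by_cases h : (x, y) ∈ s
  · rw [Set.indicator_of_mem h, Set.indicator_of_mem (by exact h)]
  · rw [Set.indicator_of_notMem h, Set.indicator_of_notMem (by exact h)]

-- marginal density
lemma aux_marg [IsMarkovKernel κ] [IsFiniteMeasure P] [IsProbabilityMeasure π]
    (hPR : P ≪ π ⊗ₘ κ) :
    ∀ᵐ x ∂π, ∫⁻ y, P.rnDeriv (π ⊗ₘ κ) (x, y) ∂(κ x) = P.fst.rnDeriv π x := by
  have hmeas : Measurable fun x => ∫⁻ y, P.rnDeriv (π ⊗ₘ κ) (x, y) ∂(κ x) :=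
    Measurable.lintegral_kernel_prod_right (Measure.measurable_rnDeriv _ _)
  refine (Measure.eq_rnDeriv (ν := π) hmeas Measure.MutuallySingular.zero_left ?_)
  ext A hA
  simp only [Measure.add_apply, Measure.coe_zero, Pi.zero_apply, zero_add]
  rw [withDensity_apply _ hA, Measure.fst_apply hA, ← Set.prod_univ,
    ← Measure.setLIntegral_rnDeriv hPR, Measure.setLIntegral_compProd
    (Measure.measurable_rnDeriv _ _) hA MeasurableSet.univ]
  simp

lemma aux_ac (hPR : P ≪ π ⊗ₘ κ) [IsMarkovKernel κ] [IsFiniteMeasure P]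
    [IsProbabilityMeasure π] :
    P ≪ P.fst ⊗ₘ κ := by
  have hfstπ : P.fst ≪ π := by
    have h := hPR.map (f := Prod.fst) measurable_fst
    rwa [← Measure.fst, ← Measure.fst, Measure.fst_compProd] at h
  refine Measure.AbsolutelyContinuous.mk fun s hs hs0 => ?_
  rw [Measure.compProd_apply hs, lintegral_eq_zero_iff
    (Kernel.measurable_kernel_prodMk_left hs)] at hs0
  have h2 : ∀ᵐ x ∂π, P.fst.rnDeriv π x ≠ 0 → κ x (Prod.mk x ⁻¹' s) = 0 := by
    rw [← Measure.withDensity_rnDeriv_eq _ _ hfstπ] at hs0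
    rw [← ae_withDensity_iff (Measure.measurable_rnDeriv _ _)]
    exact hs0
  have hPs : P s = ∫⁻ x, ∫⁻ y, s.indicator (P.rnDeriv (π ⊗ₘ κ)) (x, y) ∂(κ x) ∂π := by
    rw [← Measure.setLIntegral_rnDeriv hPR, ← lintegral_indicator hs,
      Measure.lintegral_compProd ((Measure.measurable_rnDeriv _ _).indicator hs)]
  rw [hPs]
  have h3 : ∀ᵐ x ∂π, ∫⁻ y, s.indicator (P.rnDeriv (π ⊗ₘ κ)) (x, y) ∂(κ x) = 0 := by
    filter_upwards [h2, aux_marg hPR] with x hx hmarg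
    simp_rw [aux_indicator_eq s (P.rnDeriv (π ⊗ₘ κ)) x]
    rw [lintegral_indicator (measurable_prodMk_left hs)]
    by_cases hfx : P.fst.rnDeriv π x = 0
    · rw [← hmarg] at hfx
      exact le_antisymm (le_of_le_of_eq (setLIntegral_le_lintegral _ _) hfx) zero_le
    · exact setLIntegral_measure_zero _ _ (hx hfx)
  rw [lintegral_congr_ae h3, lintegral_zero]

lemma aux_compProd_withDensity [IsMarkovKernel κ] [IsFiniteMeasure P] [IsProbabilityMeasure π]
    (hfstπ : P.fst ≪ π) :
    P.fst ⊗ₘ κ = (π ⊗ₘ κ).withDensity (fun p => P.fst.rnDeriv π p.1) := by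
  have hm : Measurable fun p : X × Y => P.fst.rnDeriv π p.1 :=
    (Measure.measurable_rnDeriv _ _).comp measurable_fst
  ext s hs
  rw [withDensity_apply _ hs, Measure.compProd_apply hs, ← lintegral_indicator hs,
    Measure.lintegral_compProd (hm.indicator hs)]
  have hfst : P.fst = π.withDensity (P.fst.rnDeriv π) :=
    (Measure.withDensity_rnDeriv_eq _ _ hfstπ).symm
  nth_rw 1 [hfst]
  rw [lintegral_withDensity_eq_lintegral_mul _ (Measure.measurable_rnDeriv _ _)
    (Kernel.measurable_kernel_prodMk_left hs)]
  congr 1 with x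
  simp_rw [aux_indicator_eq s (fun p : X × Y => P.fst.rnDeriv π p.1) x]
  rw [lintegral_indicator (measurable_prodMk_left hs), setLIntegral_const, Pi.mul_apply]

end Aux

/-- Pythagorean identity: if `KL(P ‖ π ⊗ₘ κ) < ∞` then it decomposes as
`KL(P ‖ P.fst ⊗ₘ κ) + KL(P.fst ⊗ₘ κ ‖ π ⊗ₘ κ)`, and the second term equals
`KL(P.fst ‖ π)`. -/
theorem kl_compProd_pythagorean {X Y : Type*} [MeasurableSpace X] [MeasurableSpace Y]
    [StandardBorelSpace X] [StandardBorelSpace Y]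
    (κ : Kernel X Y) [IsMarkovKernel κ]
    (P : Measure (X × Y)) [IsProbabilityMeasure P]
    (π : Measure X) [IsProbabilityMeasure π]
    (hfin : KL P (π ⊗ₘ κ) < ∞) :
    KL P (π ⊗ₘ κ) = KL P (P.fst ⊗ₘ κ) + KL (P.fst ⊗ₘ κ) (π ⊗ₘ κ) ∧
      KL (P.fst ⊗ₘ κ) (π ⊗ₘ κ) = KL P.fst π := by  -- extract hypotheses from finiteness
  rw [KL] at hfin
  split_ifs at hfin with hcond
  swap
  · exact absurd hfin (lt_irrefl _)
  obtain ⟨hPR, hint⟩ := hcond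
  set R := π ⊗ₘ κ with hR
  set Q := P.fst ⊗ₘ κ with hQ
  have hfstπ : P.fst ≪ π := by
    have h := hPR.map (f := Prod.fst) measurable_fst
    rwa [← Measure.fst, ← Measure.fst, Measure.fst_compProd] at h
  have hPQ : P ≪ Q := aux_ac hPR
  have hQR : Q ≪ R := hfstπ.compProd_left κ
  -- density of Q wrt R
  have hm : Measurable fun p : X × Y => P.fst.rnDeriv π p.1 :=
    (Measure.measurable_rnDeriv _ _).comp measurable_fst
  have dQR : Q.rnDeriv R =ᵐ[R] fun p => P.fst.rnDeriv π p.1 := by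
    rw [hQ, aux_compProd_withDensity hfstπ, ← hR]
    exact Measure.rnDeriv_withDensity R hm
  -- chain rule for rnDeriv
  have hmul : (fun z => P.rnDeriv Q z * Q.rnDeriv R z) =ᵐ[P] P.rnDeriv R :=
    hPR.ae_le (Measure.rnDeriv_mul_rnDeriv hPQ)
  set g : X × Y → ℝ := fun p => llr P.fst π p.1 with hg_def
  have hgmeas : Measurable g := (measurable_llr _ _).comp measurable_fst
  -- a.e. decomposition of llr
  have hllr : llr P R =ᵐ[P] fun z => llr P Q z + g z := by
    filter_upwards [hmul, hPR.ae_le dQR, Measure.rnDeriv_pos hPQ,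
      hPQ.ae_le (Measure.rnDeriv_lt_top P Q), hPQ.ae_le (Measure.rnDeriv_pos hQR),
      hPR.ae_le (Measure.rnDeriv_lt_top Q R)] with z h1 h2 h3 h4 h5 h6
    have e1 : (P.rnDeriv Q z).toReal ≠ 0 := (ENNReal.toReal_pos h3.ne' h4.ne).ne'
    have e2 : (Q.rnDeriv R z).toReal ≠ 0 := (ENNReal.toReal_pos h5.ne' h6.ne).ne'
    simp only [hg_def, llr_def, ← h1, ENNReal.toReal_mul]
    rw [Real.log_mul e1 e2, h2]
  -- integrability of both pieces
  have hgneg : Integrable (fun z => max (- g z) 0) P := by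
    have h := aux_negpart_llr_integrable hfstπ
    have : Integrable ((fun x => max (- llr P.fst π x) 0) ∘ Prod.fst) P :=
      (integrable_map_measure h.aestronglyMeasurable measurable_fst.aemeasurable).mp
        (by rwa [← Measure.fst])
    exact this
  have huneg : Integrable (fun z => max (- llr P Q z) 0) P := aux_negpart_llr_integrable hPQ
  have hmaxid : ∀ a : ℝ, max a 0 = a + max (-a) 0 := by
    intro a
    rcases le_total a 0 with h | h
    · rw [max_eq_right h, max_eq_left (by linarith)]; ring
    · rw [max_eq_left h, max_eq_right (by linarith)]; ring
  have hpos_sum : Integrable (fun z => max (llr P Q z) 0 + max (g z) 0) P := by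
    have heq : (fun z => max (llr P Q z) 0 + max (g z) 0)
        =ᵐ[P] fun z => llr P R z + (max (- llr P Q z) 0 + max (- g z) 0) := by
      filter_upwards [hllr] with z hz
      rw [hz, hmaxid (llr P Q z), hmaxid (g z)]
      ring
    exact Integrable.congr (hint.add (huneg.add hgneg)) heq.symm
  have hupos : Integrable (fun z => max (llr P Q z) 0) P := by
    refine Integrable.mono' hpos_sum
      (((measurable_llr _ _).max measurable_const).aestronglyMeasurable) ?_
    filter_upwards with z
    rw [Real.norm_eq_abs, abs_of_nonneg (le_max_right _ _)]
    have : (0:ℝ) ≤ max (g z) 0 := le_max_right _ _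
    linarith
  have hgpos : Integrable (fun z => max (g z) 0) P := by
    refine Integrable.mono' hpos_sum ((hgmeas.max measurable_const).aestronglyMeasurable) ?_
    filter_upwards with z
    rw [Real.norm_eq_abs, abs_of_nonneg (le_max_right _ _)]
    have : (0:ℝ) ≤ max (llr P Q z) 0 := le_max_right _ _
    linarith
  have hu : Integrable (llr P Q) P := by
    have : llr P Q = fun z => max (llr P Q z) 0 - max (- llr P Q z) 0 := by
      funext z
      rw [hmaxid (llr P Q z)]; ring
    rw [this]
    exact hupos.sub huneg
  have hgint : Integrable g P := by
    have : g = fun z => max (g z) 0 - max (- g z) 0 := by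
      funext z
      rw [hmaxid (g z)]; ring
    rw [this]
    exact hgpos.sub hgneg
  -- integrability over the marginal
  have hgfst : Integrable (llr P.fst π) P.fst := by
    rw [Measure.fst]
    exact (integrable_map_measure (stronglyMeasurable_llr _ _).aestronglyMeasurable
      measurable_fst.aemeasurable).mpr hgint
  have hIg : ∫ z, g z ∂P = ∫ x, llr P.fst π x ∂P.fst := by
    rw [Measure.fst, integral_map measurable_fst.aemeasurable
      (stronglyMeasurable_llr _ _).aestronglyMeasurable]
    rfl
  -- llr of Q wrt R
  have hllrQR : llr Q R =ᵐ[Q] g := by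
    filter_upwards [hQR.ae_le dQR] with z hz
    simp only [hg_def, llr_def]
    rw [hz]
  have hQRint : Integrable (llr Q R) Q := by
    refine Integrable.congr ?_ hllrQR.symm
    have : Q.fst = P.fst := Measure.fst_compProd _ _
    rw [hg_def]
    have h2 : Integrable ((fun x => llr P.fst π x) ∘ Prod.fst) Q :=
      (integrable_map_measure (stronglyMeasurable_llr _ _).aestronglyMeasurable
        measurable_fst.aemeasurable).mp (by rwa [← Measure.fst, this])
    exact h2
  have hIQR : ∫ z, llr Q R z ∂Q = ∫ x, llr P.fst π x ∂P.fst := by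
    rw [integral_congr_ae hllrQR, hg_def]
    have : Q.fst = P.fst := Measure.fst_compProd _ _
    rw [← this, Measure.fst, integral_map measurable_fst.aemeasurable
      (stronglyMeasurable_llr _ _).aestronglyMeasurable]
  -- nonnegativity
  have hn1 : 0 ≤ ∫ z, llr P Q z ∂P := aux_integral_llr_nonneg hPQ hu
  have hn2 : 0 ≤ ∫ x, llr P.fst π x ∂P.fst := aux_integral_llr_nonneg hfstπ hgfst
  -- assemble
  have hKLPR : KL P R = ENNReal.ofReal (∫ z, llr P R z ∂P) := if_pos ⟨hPR, hint⟩
  have hKLPQ : KL P Q = ENNReal.ofReal (∫ z, llr P Q z ∂P) := if_pos ⟨hPQ, hu⟩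
  have hKLQR : KL Q R = ENNReal.ofReal (∫ x, llr P.fst π x ∂P.fst) := by
    rw [KL, if_pos ⟨hQR, hQRint⟩, hIQR]
  have hKLfst : KL P.fst π = ENNReal.ofReal (∫ x, llr P.fst π x ∂P.fst) :=
    if_pos ⟨hfstπ, hgfst⟩
  have hsum : ∫ z, llr P R z ∂P = ∫ z, llr P Q z ∂P + ∫ x, llr P.fst π x ∂P.fst := by
    rw [integral_congr_ae hllr, integral_add hu hgint, hIg]
  constructor
  · rw [hKLPR, hKLPQ, hKLQR, hsum, ENNReal.ofReal_add hn1 hn2]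
  · rw [hKLQR, hKLfst]
end

section
/- Let V be a finite set, S ⊆ V, and d ≥ 1. Let f_v : ℝ^d → [0,∞) for v ∈ V and h : (ℝ^d)^S → [0,∞) be measurable functions such that ∏_{v∈V} f_v(x_v) = h((x_i)_{i∈S}) for Lebesgue-almost every x ∈ (ℝ^d)^V, and suppose the set {x ∈ (ℝ^d)^V : ∏_{v∈V} f_v(x_v) > 0} has positive Lebesgue measure. Then for every j ∈ V \ S there exists a constant c_j ∈ (0,∞) such that f_j(y) = c_j for Lebesgue-almost every y ∈ ℝ^d. -/
open MeasureTheory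

/-- If a product `∏_{v ∈ V} f v (x v)` of nonnegative single-coordinate factors agrees
Lebesgue-almost everywhere with a function `h` of the coordinates in `S` only, and the product
is positive on a set of positive Lebesgue measure, then for every vertex `j ∉ S` the factor
`f j` is Lebesgue-almost everywhere equal to a positive constant. -/
theorem factor_ae_const_of_product_eq_subset_function
    {V : Type*} [Fintype V] [DecidableEq V] (S : Finset V) (d : ℕ) (hd : 1 ≤ d)
    (f : V → (Fin d → ℝ) → ℝ)
    (hf_nonneg : ∀ v y, 0 ≤ f v y)
    (hf_meas : ∀ v, Measurable (f v))
    (h : ({i // i ∈ S} → Fin d → ℝ) → ℝ)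
    (hh_nonneg : ∀ z, 0 ≤ h z)
    (hh_meas : Measurable h)
    (heq : ∀ᵐ x : V → Fin d → ℝ, (∏ v, f v (x v)) = h (fun i => x i.1))
    (hpos : 0 < volume {x : V → Fin d → ℝ | 0 < ∏ v, f v (x v)}) :
    ∀ j ∈ Finset.univ \ S, ∃ c : ℝ, 0 < c ∧ ∀ᵐ y : Fin d → ℝ, f j y = c := by
  intro j hj
  have hjS : j ∉ S := (Finset.mem_sdiff.mp hj).2
  set p : V → Prop := fun i => i ≠ j with hp
  haveI instU : Unique {i // ¬ p i} := by
    refine ⟨⟨⟨j, by simp [hp]⟩⟩, ?_⟩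
    rintro ⟨i, hi⟩
    simp only [hp, not_not] at hi
    subst hi; rfl
  -- the measure-preserving map
  set κ : (({i // p i} → (Fin d → ℝ)) × (Fin d → ℝ)) → (V → (Fin d → ℝ)) := fun z =>
    (MeasurableEquiv.piEquivPiSubtypeProd (fun _ : V => (Fin d → ℝ)) p).symm
      (z.1, fun _ => z.2) with hκ
  have MPκ : MeasurePreserving κ volume volume := by
    have h1 := (volume_preserving_piEquivPiSubtypeProd (fun _ : V => (Fin d → ℝ)) p).symm
      (MeasurableEquiv.piEquivPiSubtypeProd (fun _ : V => (Fin d → ℝ)) p)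
    have h2 := (MeasurePreserving.id (volume : Measure ({i // p i} → (Fin d → ℝ)))).prod
      ((volume_preserving_funUnique {i // ¬ p i} (Fin d → ℝ)).symm
        (MeasurableEquiv.funUnique _ _))
    refine MeasurePreserving.comp ?_ h2
    convert h1 using 2
    congr 1
    congr 1
    congr 1
    congr 1; exact Subsingleton.elim _ _
  -- coordinates of κ
  have hκ_apply : ∀ z v, κ z v = if hv : p v then z.1 ⟨v, hv⟩ else z.2 := fun z v => rfl
  set g : ({i // p i} → (Fin d → ℝ)) → ℝ := fun a => ∏ v : {i // p i}, f v.1 (a v) with hg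
  have hg_nonneg : ∀ a, 0 ≤ g a := fun a =>
    Finset.prod_nonneg fun v _ => hf_nonneg v.1 (a v)
  have hg_meas : Measurable g :=
    Finset.measurable_prod _ fun v _ => (hf_meas v.1).comp (measurable_pi_apply v)
  -- product splits
  have hprod : ∀ z, (∏ v, f v (κ z v)) = f j z.2 * g z.1 := by
    intro z
    have hgz : g z.1 = ∏ v : {i // p i}, f v.1 (z.1 v) := rfl
    rw [Fintype.prod_eq_mul_prod_compl j, hgz]
    congr 1
    · rw [hκ_apply]
      simp [hp]
    · rw [Finset.prod_subtype (p := p) ({j}ᶜ : Finset V) (fun x => by simp [hp])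
        (fun v => f v (κ z v))]
      refine Finset.prod_congr rfl fun v _ => ?_
      rw [hκ_apply]
      rw [dif_pos v.2]
  set H : ({i // p i} → (Fin d → ℝ)) → ℝ :=
    fun a => h (fun i => a ⟨i.1, fun hij => hjS (hij ▸ i.2)⟩) with hH
  have hHeq : ∀ z, h (fun i : {i // i ∈ S} => κ z i.1) = H z.1 := by
    intro z
    have : H z.1 = h (fun i => z.1 ⟨i.1, fun hij => hjS (hij ▸ i.2)⟩) := rfl
    rw [this]
    congr 1
    funext i
    rw [hκ_apply, dif_pos]
  -- transfer the a.e. identity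
  have hmeas_prod : Measurable fun x : V → (Fin d → ℝ) => ∏ v, f v (x v) :=
    Finset.measurable_prod _ fun v _ => (hf_meas v).comp (measurable_pi_apply v)
  have hmeas_h : Measurable fun x : V → (Fin d → ℝ) => h (fun i : {i // i ∈ S} => x i.1) :=
    hh_meas.comp (measurable_pi_lambda _ fun i => measurable_pi_apply i.1)
  have heq2 : ∀ᵐ z : ({i // p i} → (Fin d → ℝ)) × (Fin d → ℝ)
      ∂((volume : Measure ({i // p i} → (Fin d → ℝ))).prod (volume : Measure (Fin d → ℝ))),
      f j z.2 * g z.1 = H z.1 := by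
    have hset : MeasurableSet
        {x : V → (Fin d → ℝ) | ¬ (∏ v, f v (x v)) = h (fun i => x i.1)} :=
      (measurableSet_eq_fun hmeas_prod hmeas_h).compl
    have h0 : volume {x : V → (Fin d → ℝ) | ¬ (∏ v, f v (x v)) = h (fun i => x i.1)} = 0 := by
      exact ae_iff.mp heq
    have hkey := MPκ.measure_preimage hset.nullMeasurableSet
    rw [h0] at hkey
    rw [ae_iff]
    have hpre : κ ⁻¹' {x : V → (Fin d → ℝ) | ¬ (∏ v, f v (x v)) = h (fun i => x i.1)} =
        {z : ({i // p i} → (Fin d → ℝ)) × (Fin d → ℝ) | ¬ f j z.2 * g z.1 = H z.1} := by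
      ext z
      simp only [Set.mem_preimage, Set.mem_setOf_eq, hprod z, hHeq z]
    rw [hpre] at hkey
    exact hkey
  have hAE := Measure.ae_ae_of_ae_prod heq2
  -- transfer positivity
  set A : Set (({i // p i} → (Fin d → ℝ)) × (Fin d → ℝ)) :=
    {z | 0 < f j z.2 * g z.1} with hA
  have hA_meas : MeasurableSet A :=
    measurableSet_lt measurable_const
      (((hf_meas j).comp measurable_snd).mul (hg_meas.comp measurable_fst))
  have hA_pos : ((volume : Measure ({i // p i} → (Fin d → ℝ))).prod
      (volume : Measure (Fin d → ℝ))) A ≠ 0 := by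
    have hset : MeasurableSet {x : V → (Fin d → ℝ) | 0 < ∏ v, f v (x v)} :=
      measurableSet_lt measurable_const hmeas_prod
    have hkey := MPκ.measure_preimage hset.nullMeasurableSet
    have hpre : κ ⁻¹' {x : V → (Fin d → ℝ) | 0 < ∏ v, f v (x v)} = A := by
      ext z
      simp only [Set.mem_preimage, Set.mem_setOf_eq, hprod z, hA]
    rw [hpre] at hkey
    rw [show ((volume : Measure ({i // p i} → (Fin d → ℝ))).prod
      (volume : Measure (Fin d → ℝ))) = volume from rfl, hkey]
    exact hpos.ne'
  have hfreq : ¬ ∀ᵐ a : {i // p i} → (Fin d → ℝ),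
      (volume : Measure (Fin d → ℝ)) (Prod.mk a ⁻¹' A) = 0 := by
    intro hcon
    exact hA_pos ((Measure.measure_prod_null hA_meas).mpr hcon)
  obtain ⟨a, Qa, Ra⟩ : ∃ a, (∀ᵐ y : Fin d → ℝ, f j y * g a = H a) ∧
      (volume : Measure (Fin d → ℝ)) (Prod.mk a ⁻¹' A) ≠ 0 := by
    by_contra hcon
    push_neg at hcon
    exact hfreq (hAE.mono fun a ha => hcon a ha)
  have hslice : Prod.mk a ⁻¹' A = {y : Fin d → ℝ | 0 < f j y * g a} := rfl
  rw [hslice] at Ra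
  obtain ⟨y₀, hy₀⟩ : ({y : Fin d → ℝ | 0 < f j y * g a}).Nonempty :=
    nonempty_of_measure_ne_zero Ra
  have hy₀' : 0 < f j y₀ * g a := hy₀
  have hga : 0 < g a := by
    have h1 := hf_nonneg j y₀
    have h2 := hg_nonneg a
    nlinarith
  have hHa : 0 < H a := by
    by_contra hcon
    push_neg at hcon
    apply Ra
    rw [measure_eq_zero_iff_ae_notMem]
    refine Qa.mono fun y hy hymem => ?_
    have hlt : (0 : ℝ) < f j y * g a := hymem
    rw [hy] at hlt
    exact absurd (hlt.trans_le hcon) (lt_irrefl 0)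
  refine ⟨H a / g a, div_pos hHa hga, ?_⟩
  refine Qa.mono fun y hy => ?_
  rw [eq_div_iff hga.ne']
  exact hy
end

section
/- Let X and Y be standard Borel spaces and let P and Q be probability measures on X × Y with disintegrations P = P_X ⊗ κ_P and Q = Q_X ⊗ κ_Q, where P_X, Q_X are the first marginals and κ_P, κ_Q are Markov kernels from X to Y (regular conditional distributions of the second coordinate given the first). If KL(P ‖ Q) < ∞, then KL(P ‖ Q) ≥ KL(P_X ‖ Q_X), and equality holds if and only if κ_P(x) = κ_Q(x) for P_X-almost every x ∈ X. -/
open MeasureTheory ProbabilityTheory Classical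

open scoped ENNReal

section Aux
open Real Set
variable {α : Type*} [MeasurableSpace α] {μ ν : Measure α}

lemma my_lintegral_inv_rnDeriv_le [SigmaFinite μ] [SigmaFinite ν] (hμν : μ ≪ ν) :
    ∫⁻ x, (μ.rnDeriv ν x)⁻¹ ∂μ ≤ ν Set.univ := by
  rw [← MeasureTheory.lintegral_rnDeriv_mul hμν (f := fun x => (μ.rnDeriv ν x)⁻¹) (Measure.measurable_rnDeriv μ ν).inv.aemeasurable]
  calc ∫⁻ x, μ.rnDeriv ν x * (μ.rnDeriv ν x)⁻¹ ∂ν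
      ≤ ∫⁻ _, 1 ∂ν := lintegral_mono fun x => ENNReal.mul_inv_le_one _
    _ = ν Set.univ := by simp

lemma my_integrable_inv_toReal_rnDeriv [SigmaFinite μ] [IsFiniteMeasure ν] (hμν : μ ≪ ν) :
    Integrable (fun x => ((μ.rnDeriv ν x).toReal)⁻¹) μ := by
  have h : (fun x => ((μ.rnDeriv ν x).toReal)⁻¹) = fun x => ((μ.rnDeriv ν x)⁻¹).toReal := by
    ext x; rw [ENNReal.toReal_inv]
  rw [h]
  refine integrable_toReal_of_lintegral_ne_top (Measure.measurable_rnDeriv μ ν).inv.aemeasurable ?_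
  exact ((my_lintegral_inv_rnDeriv_le hμν).trans_lt (measure_lt_top ν _)).ne

lemma my_integral_inv_toReal_rnDeriv_le [SigmaFinite μ] [IsProbabilityMeasure ν] (hμν : μ ≪ ν) :
    ∫ x, ((μ.rnDeriv ν x).toReal)⁻¹ ∂μ ≤ 1 := by
  have h : (fun x => ((μ.rnDeriv ν x).toReal)⁻¹) = fun x => ((μ.rnDeriv ν x)⁻¹).toReal := by
    ext x; rw [ENNReal.toReal_inv]
  rw [h, integral_toReal (f := fun x => (μ.rnDeriv ν x)⁻¹) (Measure.measurable_rnDeriv μ ν).inv.aemeasurable ?_]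
  · have := my_lintegral_inv_rnDeriv_le hμν
    simp only [measure_univ] at this
    exact ENNReal.toReal_le_of_le_ofReal zero_le_one (by simpa using this)
  · filter_upwards [Measure.rnDeriv_pos hμν] with x hx
    simp [ENNReal.inv_lt_top, hx]

lemma my_llr_ge [SigmaFinite μ] [SigmaFinite ν] (hμν : μ ≪ ν) :
    ∀ᵐ x ∂μ, 1 - ((μ.rnDeriv ν x).toReal)⁻¹ ≤ llr μ ν x := by
  filter_upwards [Measure.rnDeriv_pos hμν, hμν.ae_le (Measure.rnDeriv_lt_top μ ν)]
    with x hpos hlt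
  have ht : 0 < (μ.rnDeriv ν x).toReal := ENNReal.toReal_pos hpos.ne' hlt.ne
  have := Real.log_le_sub_one_of_pos (inv_pos.mpr ht)
  rw [Real.log_inv] at this
  simp only [llr]
  linarith

lemma my_integral_llr_nonneg [IsProbabilityMeasure μ] [IsProbabilityMeasure ν] (hμν : μ ≪ ν)
    (h_int : Integrable (llr μ ν) μ) : 0 ≤ ∫ x, llr μ ν x ∂μ := by
  have h1 : ∫ x, (1 - ((μ.rnDeriv ν x).toReal)⁻¹) ∂μ ≤ ∫ x, llr μ ν x ∂μ :=
    integral_mono_ae (integrable_const 1 |>.sub (my_integrable_inv_toReal_rnDeriv hμν)) h_int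
      (my_llr_ge hμν)
  have h2 : ∫ x, (1 - ((μ.rnDeriv ν x).toReal)⁻¹) ∂μ
      = 1 - ∫ x, ((μ.rnDeriv ν x).toReal)⁻¹ ∂μ := by
    rw [integral_sub (integrable_const 1) (my_integrable_inv_toReal_rnDeriv hμν)]
    simp
  have h3 := my_integral_inv_toReal_rnDeriv_le hμν
  linarith

lemma my_integral_llr_eq_zero_iff [IsProbabilityMeasure μ] [IsProbabilityMeasure ν] (hμν : μ ≪ ν)
    (h_int : Integrable (llr μ ν) μ) : ∫ x, llr μ ν x ∂μ = 0 ↔ μ = ν := by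
  constructor
  · intro h0
    -- the nonnegative function llr - (1 - inv) has integral ≤ 0, hence is a.e. zero
    set g : α → ℝ := fun x => llr μ ν x - (1 - ((μ.rnDeriv ν x).toReal)⁻¹) with hg
    have hg_int : Integrable g μ :=
      h_int.sub ((integrable_const 1).sub (my_integrable_inv_toReal_rnDeriv hμν))
    have hg_nonneg : 0 ≤ᵐ[μ] g := by
      filter_upwards [my_llr_ge hμν] with x hx
      simp only [hg, Pi.zero_apply]; linarith
    have hg_le : ∫ x, g x ∂μ ≤ 0 := by
      have hsub : Integrable (fun x => 1 - ((μ.rnDeriv ν x).toReal)⁻¹) μ :=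
        (integrable_const 1).sub (my_integrable_inv_toReal_rnDeriv hμν)
      have h2 : ∫ x, g x ∂μ = ∫ x, llr μ ν x ∂μ
          - (1 - ∫ x, ((μ.rnDeriv ν x).toReal)⁻¹ ∂μ) := by
        rw [integral_sub h_int hsub,
          integral_sub (integrable_const 1) (my_integrable_inv_toReal_rnDeriv hμν)]
        simp
      have h3 := my_integral_inv_toReal_rnDeriv_le hμν
      rw [h2, h0]; linarith
    have hg_zero : g =ᵐ[μ] 0 := by
      rw [← integral_eq_zero_iff_of_nonneg_ae hg_nonneg hg_int]
      exact le_antisymm hg_le (integral_nonneg_of_ae hg_nonneg)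
    -- deduce rnDeriv = 1 a.e. μ
    have h_one : μ.rnDeriv ν =ᵐ[μ] 1 := by
      filter_upwards [hg_zero, Measure.rnDeriv_pos hμν,
        hμν.ae_le (Measure.rnDeriv_lt_top μ ν)] with x hx hpos hlt
      have ht : 0 < (μ.rnDeriv ν x).toReal := ENNReal.toReal_pos hpos.ne' hlt.ne
      have hlog : Real.log (μ.rnDeriv ν x).toReal = 1 - ((μ.rnDeriv ν x).toReal)⁻¹ := by
        have : g x = 0 := hx
        simp only [hg, llr] at this ⊢
        linarith
      have ht1 : (μ.rnDeriv ν x).toReal = 1 := by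
        by_contra hne
        have h2 := Real.log_lt_sub_one_of_pos (inv_pos.mpr ht) (by
          simpa [inv_eq_one] using hne)
        rw [Real.log_inv] at h2
        linarith
      exact ENNReal.toReal_eq_one_iff _ |>.mp ht1
    -- transfer to ν-a.e. and conclude
    have hwd : ν.withDensity (μ.rnDeriv ν) = μ := Measure.withDensity_rnDeriv_eq μ ν hμν
    set S : Set α := {x | μ.rnDeriv ν x ≠ 1} with hS
    have hSm : MeasurableSet S :=
      (Measure.measurable_rnDeriv μ ν) (measurableSet_singleton 1) |>.compl
    have hμS : μ S = 0 := by
      have h := h_one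
      rw [Filter.EventuallyEq, ae_iff] at h
      simpa [S] using h
    have hνrn_S : ∀ᵐ x ∂ν, x ∈ S → μ.rnDeriv ν x = 0 := by
      rw [← hwd] at hμS
      rw [withDensity_apply _ hSm, lintegral_eq_zero_iff
        ((Measure.measurable_rnDeriv μ ν))] at hμS
      exact (ae_restrict_iff' hSm).mp hμS
    have hcalc : ∫⁻ x, μ.rnDeriv ν x ∂ν = ν Sᶜ := by
      rw [← lintegral_add_compl _ hSm]
      have h1 : ∫⁻ x in S, μ.rnDeriv ν x ∂ν = 0 := by
        rw [lintegral_eq_zero_iff (Measure.measurable_rnDeriv μ ν)]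
        exact (ae_restrict_iff' hSm).mpr hνrn_S
      have h2 : ∫⁻ x in Sᶜ, μ.rnDeriv ν x ∂ν = ν Sᶜ := by
        rw [setLIntegral_congr_fun hSm.compl (fun x hx => ?_), setLIntegral_one]
        simpa [S] using hx
      rw [h1, h2, zero_add]
    have htotal : ∫⁻ x, μ.rnDeriv ν x ∂ν = 1 := by
      rw [Measure.lintegral_rnDeriv hμν]; simp
    have hνS : ν S = 0 := by
      have h4 : ν Sᶜ = 1 := by rw [← hcalc, htotal]
      exact (prob_compl_eq_one_iff hSm).mp h4
    have h_one' : μ.rnDeriv ν =ᵐ[ν] 1 := by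
      rw [Filter.EventuallyEq, ae_iff]
      simpa [S] using hνS
    rw [← hwd, withDensity_congr_ae h_one', withDensity_one]
  · rintro rfl
    have : llr μ μ =ᵐ[μ] 0 := by
      filter_upwards [Measure.rnDeriv_self μ] with x hx
      simp [llr, hx]
    rw [integral_congr_ae this]; simp

lemma my_mul_negpart_le (e : ℝ≥0∞) : e * ENNReal.ofReal (-(Real.log e.toReal)) ≤ 1 := by
  by_cases he : e = ∞
  · simp [he]
  set t := e.toReal with ht
  have ht0 : 0 ≤ t := ENNReal.toReal_nonneg
  rcases eq_or_lt_of_le ht0 with h0 | hpos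
  · have : e = 0 := by
      rw [← ENNReal.ofReal_toReal he, ← ht, ← h0, ENNReal.ofReal_zero]
    simp [this]
  rcases le_or_gt (-(Real.log t)) 0 with hneg | hposlog
  · rw [ENNReal.ofReal_eq_zero.mpr hneg, mul_zero]
    exact zero_le_one
  · have hkey : t * (-(Real.log t)) ≤ 1 := by
      have h1 : Real.log t⁻¹ ≤ t⁻¹ - 1 := Real.log_le_sub_one_of_pos (inv_pos.mpr hpos)
      rw [Real.log_inv] at h1
      have h2 : t * (-(Real.log t)) ≤ t * (t⁻¹ - 1) :=
        mul_le_mul_of_nonneg_left h1 ht0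
      have h3 : t * (t⁻¹ - 1) = 1 - t := by field_simp
      nlinarith
    calc e * ENNReal.ofReal (-(Real.log t))
        = ENNReal.ofReal t * ENNReal.ofReal (-(Real.log t)) := by
          rw [ENNReal.ofReal_toReal he]
      _ = ENNReal.ofReal (t * (-(Real.log t))) := (ENNReal.ofReal_mul ht0).symm
      _ ≤ ENNReal.ofReal 1 := ENNReal.ofReal_le_ofReal hkey
      _ = 1 := ENNReal.ofReal_one

lemma my_lintegral_negpart_llr_le [SigmaFinite μ] [SigmaFinite ν] (hμν : μ ≪ ν) :
    ∫⁻ x, ENNReal.ofReal (-(llr μ ν x)) ∂μ ≤ ν Set.univ := by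
  rw [← lintegral_rnDeriv_mul hμν (f := fun x => ENNReal.ofReal (-(llr μ ν x)))
    ((measurable_llr μ ν).neg.ennreal_ofReal.aemeasurable)]
  calc ∫⁻ x, μ.rnDeriv ν x * ENNReal.ofReal (-(llr μ ν x)) ∂ν
      ≤ ∫⁻ _, 1 ∂ν := lintegral_mono fun x => my_mul_negpart_le _
    _ = ν Set.univ := by simp

lemma my_ofReal_max_zero (a : ℝ) : ENNReal.ofReal (max a 0) = ENNReal.ofReal a := by
  rcases le_total a 0 with h | h
  · rw [max_eq_right h, ENNReal.ofReal_zero, eq_comm, ENNReal.ofReal_eq_zero.mpr h]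
  · rw [max_eq_left h]

lemma my_integrable_negpart_llr [SigmaFinite μ] [IsFiniteMeasure ν] (hμν : μ ≪ ν) :
    Integrable (fun x => max (-(llr μ ν x)) 0) μ := by
  refine ⟨((measurable_llr μ ν).neg.max measurable_const).aestronglyMeasurable, ?_⟩
  rw [hasFiniteIntegral_iff_ofReal (f := fun x => max (-(llr μ ν x)) 0)
    (ae_of_all _ fun x => le_max_right _ _)]
  simp_rw [my_ofReal_max_zero]
  exact (my_lintegral_negpart_llr_le hμν).trans_lt (measure_lt_top ν _)

end Aux

/-- **Data-processing / chain rule for KL on a product space.** If `P = P.fst ⊗ₘ κP` and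
`Q = Q.fst ⊗ₘ κQ` are disintegrations of probability measures on `X × Y` and
`KL(P ‖ Q) < ∞`, then `KL(P ‖ Q) ≥ KL(P.fst ‖ Q.fst)`, with equality if and only if
`κP x = κQ x` for `P.fst`-almost every `x`. -/
theorem kl_fst_le_of_disintegration
    {X Y : Type*} [MeasurableSpace X] [MeasurableSpace Y]
    [StandardBorelSpace X] [StandardBorelSpace Y]
    (P Q : Measure (X × Y)) [IsProbabilityMeasure P] [IsProbabilityMeasure Q]
    (κP κQ : Kernel X Y) [IsMarkovKernel κP] [IsMarkovKernel κQ]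
    (hP : P = P.fst ⊗ₘ κP) (hQ : Q = Q.fst ⊗ₘ κQ)
    (hfin : KL P Q < ∞) :
    KL P.fst Q.fst ≤ KL P Q ∧
      (KL P Q = KL P.fst Q.fst ↔ ∀ᵐ x ∂P.fst, κP x = κQ x) := by
  classical
  -- unpack finiteness
  have hPQ : P ≪ Q ∧ Integrable (llr P Q) P := by
    by_contra h
    rw [KL, if_neg h] at hfin
    exact absurd rfl hfin.ne
  obtain ⟨hac, hint⟩ := hPQ
  have hKLPQ : KL P Q = ENNReal.ofReal (∫ p, llr P Q p ∂P) := by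
    rw [KL, if_pos ⟨hac, hint⟩]
  have hμν : P.fst ≪ Q.fst := hac.map measurable_fst
  -- singular part of the kernels vanishes
  set η : Kernel X Y := κQ.withDensity (κP.rnDeriv κQ) with hη_def
  set ξ : Kernel X Y := κP.singularPart κQ with hξ_def
  have hκ_add : η + ξ = κP := Kernel.rnDeriv_add_singularPart κP κQ
  have hP_add : P = P.fst ⊗ₘ η + P.fst ⊗ₘ ξ := by
    conv_lhs => rw [hP, ← hκ_add]
    exact Measure.compProd_add_right _ _ _
  set S : Set (X × Y) := Kernel.mutuallySingularSet κP κQ with hS_def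
  have hSm : MeasurableSet S := Kernel.measurableSet_mutuallySingularSet κP κQ
  have hslice : ∀ a : X, Prod.mk a ⁻¹' S = Kernel.mutuallySingularSetSlice κP κQ a :=
    fun a => rfl
  have h1 : (P.fst ⊗ₘ ξ) Sᶜ = 0 := by
    rw [Measure.compProd_apply hSm.compl]
    have h0 : ∀ a : X, ξ a ((Prod.mk a ⁻¹' S)ᶜ) = 0 := by
      intro a
      rw [hslice a]
      exact Kernel.singularPart_compl_mutuallySingularSetSlice κP κQ a
    calc ∫⁻ a, ξ a (Prod.mk a ⁻¹' Sᶜ) ∂P.fst = ∫⁻ a, ξ a ((Prod.mk a ⁻¹' S)ᶜ) ∂P.fst := rfl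
      _ = 0 := by simp [h0]
  have h2 : Q S = 0 := by
    rw [hQ, Measure.compProd_apply hSm]
    have : ∀ a : X, κQ a (Prod.mk a ⁻¹' S) = 0 := by
      intro a
      rw [hslice a]
      exact Kernel.measure_mutuallySingularSetSlice κP κQ a
    simp [this]
  have h3 : P S = 0 := hac h2
  have hξ0 : P.fst ⊗ₘ ξ = 0 := by
    rw [← Measure.measure_univ_eq_zero]
    have h4 : (P.fst ⊗ₘ ξ) S = 0 := by
      have hle : (P.fst ⊗ₘ ξ) S ≤ P S := by
        conv_rhs => rw [hP_add]
        simp only [Measure.coe_add, Pi.add_apply]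
        exact le_add_self
      exact le_antisymm (hle.trans h3.le) zero_le
    refine le_antisymm ?_ zero_le
    calc (P.fst ⊗ₘ ξ) Set.univ ≤ (P.fst ⊗ₘ ξ) S + (P.fst ⊗ₘ ξ) Sᶜ := by
          rw [← Set.union_compl_self S]; exact measure_union_le _ _
      _ = 0 := by rw [h1, h4, add_zero]
  have hPd : P = P.fst ⊗ₘ η := by
    conv_lhs => rw [hP_add]
    rw [hξ0, add_zero]
  have hacK : ∀ᵐ x ∂P.fst, κP x ≪ κQ x := by
    have h5 : (P.fst ⊗ₘ ξ) Set.univ = 0 := by rw [hξ0]; simp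
    rw [Measure.compProd_apply MeasurableSet.univ] at h5
    simp only [Set.preimage_univ] at h5
    rw [lintegral_eq_zero_iff (Kernel.measurable_coe ξ MeasurableSet.univ)] at h5
    filter_upwards [h5] with x hx
    rw [← Kernel.singularPart_eq_zero_iff_absolutelyContinuous, ← hξ_def,
      ← Measure.measure_univ_eq_zero]
    exact hx
  -- the density of P with respect to Q
  set f : X × Y → ℝ≥0∞ :=
    fun p => P.fst.rnDeriv Q.fst p.1 * κP.rnDeriv κQ p.1 p.2 with hf_def
  have hf_meas : Measurable f :=
    ((Measure.measurable_rnDeriv _ _).comp measurable_fst).mul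
      (Kernel.measurable_rnDeriv κP κQ)
  have hQf : Q.withDensity f = P := by
    ext s hs
    rw [withDensity_apply _ hs, ← lintegral_indicator hs, hQ,
      Measure.lintegral_compProd (hf_meas.indicator hs)]
    have hinner : ∀ a : X, ∫⁻ y, s.indicator f (a, y) ∂κQ a
        = P.fst.rnDeriv Q.fst a * η a (Prod.mk a ⁻¹' s) := by
      intro a
      have h6 : ∀ y : Y, s.indicator f (a, y)
          = (Prod.mk a ⁻¹' s).indicator (fun y => f (a, y)) y := by
        intro y
        simp [Set.indicator_apply]
      simp_rw [h6]
      rw [lintegral_indicator (measurable_prodMk_left hs)]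
      have h7 : ∀ y : Y, f (a, y) = P.fst.rnDeriv Q.fst a * κP.rnDeriv κQ a y := fun y => rfl
      simp_rw [h7]
      rw [lintegral_const_mul _ (Kernel.measurable_rnDeriv_right κP κQ a),
        hη_def, Kernel.withDensity_apply' _ (Kernel.measurable_rnDeriv κP κQ)]
    simp_rw [hinner]
    rw [lintegral_rnDeriv_mul hμν
      (Kernel.measurable_kernel_prodMk_left (κ := η) hs).aemeasurable]
    · rw [← Measure.compProd_apply hs, ← hPd]
  have hrnP : P.rnDeriv Q =ᵐ[P] f := by
    refine hac.ae_le ?_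
    rw [← hQf]
    exact Measure.rnDeriv_withDensity Q hf_meas
  -- a.e. positivity and finiteness
  have hg_pos : ∀ᵐ p ∂P, 0 < P.fst.rnDeriv Q.fst p.1 ∧ P.fst.rnDeriv Q.fst p.1 < ∞ := by
    have hmg : Measurable (P.fst.rnDeriv Q.fst) := Measure.measurable_rnDeriv _ _
    have hms : MeasurableSet {x : X | 0 < P.fst.rnDeriv Q.fst x ∧ P.fst.rnDeriv Q.fst x < ∞} :=
      (hmg measurableSet_Ioi).inter (hmg measurableSet_Iio)
    have h1' : ∀ᵐ x ∂P.fst, 0 < P.fst.rnDeriv Q.fst x ∧ P.fst.rnDeriv Q.fst x < ∞ :=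
      (Measure.rnDeriv_pos hμν).and (hμν.ae_le (Measure.rnDeriv_lt_top _ _))
    exact (ae_map_iff measurable_fst.aemeasurable hms).mp h1'
  have hrn_pos : ∀ᵐ p ∂P, 0 < P.rnDeriv Q p ∧ P.rnDeriv Q p < ∞ :=
    (Measure.rnDeriv_pos hac).and (hac.ae_le (Measure.rnDeriv_lt_top P Q))
  -- llr decomposition
  set B : X × Y → ℝ := fun p => Real.log (κP.rnDeriv κQ p.1 p.2).toReal with hB_def
  have hB_meas : Measurable B := (Kernel.measurable_rnDeriv κP κQ).ennreal_toReal.log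
  have hllr : ∀ᵐ p ∂P, llr P Q p = llr P.fst Q.fst p.1 + B p := by
    filter_upwards [hrnP, hg_pos, hrn_pos] with p h1' h2' h4'
    obtain ⟨hg0, hgt⟩ := h2'
    rw [h1'] at h4'
    obtain ⟨hf0, hft⟩ := h4'
    have hk0 : κP.rnDeriv κQ p.1 p.2 ≠ 0 := by
      intro hk; rw [hf_def] at hf0; simp only [hk, mul_zero] at hf0; exact lt_irrefl _ hf0
    have hkt : κP.rnDeriv κQ p.1 p.2 ≠ ∞ := by
      intro hk
      rw [hf_def] at hft
      simp only [hk] at hft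
      rw [ENNReal.mul_top hg0.ne'] at hft
      exact lt_irrefl _ hft
    have ha0 : (P.fst.rnDeriv Q.fst p.1).toReal ≠ 0 :=
      (ENNReal.toReal_pos hg0.ne' hgt.ne).ne'
    have hb0 : (κP.rnDeriv κQ p.1 p.2).toReal ≠ 0 :=
      (ENNReal.toReal_pos hk0 hkt).ne'
    rw [llr, h1',
      show f p = P.fst.rnDeriv Q.fst p.1 * κP.rnDeriv κQ p.1 p.2 from rfl,
      ENNReal.toReal_mul, Real.log_mul ha0 hb0]
    rfl
  -- integrability of the pieces
  have hBneg : Integrable (fun p => max (-(B p)) 0) P := by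
    refine ⟨(hB_meas.neg.max measurable_const).aestronglyMeasurable, ?_⟩
    rw [hasFiniteIntegral_iff_ofReal (f := fun p => max (-(B p)) 0)
      (ae_of_all _ fun p => le_max_right _ _)]
    simp_rw [my_ofReal_max_zero]
    have hb1 : ∀ᵐ a ∂P.fst, ∫⁻ y, ENNReal.ofReal (-(B (a, y))) ∂κP a ≤ 1 := by
      filter_upwards [hacK] with a ha
      have heqy : (fun y => ENNReal.ofReal (-(B (a, y))))
          =ᵐ[κP a] fun y => ENNReal.ofReal (-(llr (κP a) (κQ a) y)) := by
        filter_upwards [ha.ae_le (Kernel.rnDeriv_eq_rnDeriv_measure (κ := κP) (η := κQ) (a := a))]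
          with y hy
        rw [hB_def]; simp only [llr, hy]
      rw [lintegral_congr_ae heqy]
      have := my_lintegral_negpart_llr_le ha
      simpa using this
    calc ∫⁻ p, ENNReal.ofReal (-(B p)) ∂P
        = ∫⁻ a, ∫⁻ y, ENNReal.ofReal (-(B (a, y))) ∂κP a ∂P.fst := by
          conv_lhs => rw [hP]
          exact Measure.lintegral_compProd hB_meas.neg.ennreal_ofReal
      _ ≤ ∫⁻ _, 1 ∂P.fst := lintegral_mono_ae hb1
      _ = 1 := by simp
      _ < ∞ := ENNReal.one_lt_top
  have hAneg : Integrable (fun p : X × Y => max (-(llr P.fst Q.fst p.1)) 0) P := by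
    have h8 := my_integrable_negpart_llr hμν
    exact (integrable_map_measure h8.aestronglyMeasurable
      measurable_fst.aemeasurable).mp h8
  have hApos : Integrable (fun p : X × Y => max (llr P.fst Q.fst p.1) 0) P := by
    refine Integrable.mono' (hint.abs.add hBneg)
      ((((measurable_llr _ _).comp measurable_fst).max measurable_const).aestronglyMeasurable) ?_
    filter_upwards [hllr] with p hp
    rw [Real.norm_eq_abs, abs_of_nonneg (le_max_right _ _)]
    have h9 : llr P.fst Q.fst p.1 = llr P Q p - B p := by linarith
    rcases le_total (llr P.fst Q.fst p.1) 0 with h | h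
    · rw [max_eq_right h]
      exact add_nonneg (abs_nonneg _) (le_max_right _ _)
    · rw [max_eq_left h, h9]
      have : llr P Q p - B p ≤ |llr P Q p| + max (-(B p)) 0 := by
        have := le_abs_self (llr P Q p)
        have := le_max_left (-(B p)) 0
        linarith
      exact this
  have hA : Integrable (fun p : X × Y => llr P.fst Q.fst p.1) P := by
    have h10 : (fun p : X × Y => llr P.fst Q.fst p.1)
        = fun p => max (llr P.fst Q.fst p.1) 0 - max (-(llr P.fst Q.fst p.1)) 0 := by
      ext p; rw [max_zero_sub_eq_self]
    rw [h10]
    exact hApos.sub hAneg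
  have hIntA_μ : Integrable (llr P.fst Q.fst) P.fst :=
    (integrable_map_measure (stronglyMeasurable_llr _ _).aestronglyMeasurable
      measurable_fst.aemeasurable).mpr hA
  have hBint : Integrable B P := by
    refine (hint.sub hA).congr ?_
    filter_upwards [hllr] with p hp
    show llr P Q p - llr P.fst Q.fst p.1 = B p
    linarith
  -- integral decomposition
  have hIeq : ∫ p, llr P Q p ∂P = (∫ x, llr P.fst Q.fst x ∂P.fst) + ∫ p, B p ∂P := by
    rw [integral_congr_ae hllr, integral_add hA hBint]
    congr 1
    exact (integral_map measurable_fst.aemeasurable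
      (stronglyMeasurable_llr _ _).aestronglyMeasurable).symm
  set G : X → ℝ := fun x => ∫ y, B (x, y) ∂κP x with hG_def
  have hBint' : Integrable B (P.fst ⊗ₘ κP) := by rw [← hP]; exact hBint
  have hIB : ∫ p, B p ∂P = ∫ x, G x ∂P.fst := by
    conv_lhs => rw [hP]
    exact Measure.integral_compProd hBint'
  obtain ⟨hBae, hGnorm⟩ := (Measure.integrable_compProd_iff hBint'.aestronglyMeasurable).mp hBint'
  have hG_eq : ∀ᵐ x ∂P.fst, G x = ∫ y, llr (κP x) (κQ x) y ∂κP x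
      ∧ Integrable (llr (κP x) (κQ x)) (κP x) := by
    filter_upwards [hacK, hBae] with x hx hxi
    have heq : (fun y => B (x, y)) =ᵐ[κP x] llr (κP x) (κQ x) := by
      filter_upwards [hx.ae_le (Kernel.rnDeriv_eq_rnDeriv_measure (κ := κP) (η := κQ) (a := x))]
        with y hy
      rw [hB_def]; simp only [llr, hy]
    exact ⟨integral_congr_ae heq, hxi.congr heq⟩
  have hG_nonneg : ∀ᵐ x ∂P.fst, 0 ≤ G x := by
    filter_upwards [hG_eq, hacK] with x ⟨heq, hinti⟩ hx
    rw [heq]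
    exact my_integral_llr_nonneg hx hinti
  have hGint : Integrable G P.fst := by
    refine Integrable.mono' hGnorm
      (hB_meas.stronglyMeasurable.integral_kernel_prod_right').aestronglyMeasurable ?_
    refine ae_of_all _ fun x => ?_
    exact norm_integral_le_integral_norm _
  have hIB_nonneg : 0 ≤ ∫ p, B p ∂P := by
    rw [hIB]; exact integral_nonneg_of_ae hG_nonneg
  have hIA_nonneg : 0 ≤ ∫ x, llr P.fst Q.fst x ∂P.fst := my_integral_llr_nonneg hμν hIntA_μ
  have hKLμν : KL P.fst Q.fst = ENNReal.ofReal (∫ x, llr P.fst Q.fst x ∂P.fst) := by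
    rw [KL, if_pos ⟨hμν, hIntA_μ⟩]
  constructor
  · rw [hKLPQ, hKLμν, hIeq]
    exact ENNReal.ofReal_le_ofReal (le_add_of_nonneg_right hIB_nonneg)
  · rw [hKLPQ, hKLμν, hIeq,
      ENNReal.ofReal_eq_ofReal_iff (by linarith) hIA_nonneg]
    constructor
    · intro h
      have hIB0 : ∫ p, B p ∂P = 0 := by linarith
      rw [hIB] at hIB0
      have hG0 : G =ᵐ[P.fst] 0 := by
        rw [← integral_eq_zero_iff_of_nonneg_ae hG_nonneg hGint]
        exact hIB0
      filter_upwards [hG0, hG_eq, hacK] with x h0 heq hx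
      obtain ⟨heq', hinti⟩ := heq
      refine (my_integral_llr_eq_zero_iff hx hinti).mp ?_
      rw [← heq']
      exact h0
    · intro h
      have hIB0 : ∫ p, B p ∂P = 0 := by
        rw [hIB]
        rw [integral_eq_zero_iff_of_nonneg_ae hG_nonneg hGint]
        filter_upwards [h, hG_eq, hacK] with x hxeq heq hx
        obtain ⟨heq', hinti⟩ := heq
        have : ∫ y, llr (κP x) (κQ x) y ∂κP x = 0 :=
          (my_integral_llr_eq_zero_iff hx hinti).mpr hxeq
        simp only [Pi.zero_apply]
        rw [heq', this]
      linarith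
end

section
/- Let X and Y be standard Borel spaces and let Q be a probability measure on X × Y with disintegration Q = Q_X ⊗ κ_Q, where Q_X is the first marginal and κ_Q is a Markov kernel from X to Y. Let μ be a probability measure on X. Then among all probability measures Π on X × Y whose first marginal equals μ, the divergence KL(Π ‖ Q) is minimised by Π* = μ ⊗ κ_Q, with minimal value KL(Π* ‖ Q) = KL(μ ‖ Q_X), and Π* is the unique minimiser whenever KL(μ ‖ Q_X) < ∞. Consequently, for any set C of probability measures on X, inf{ KL(Π ‖ Q) : Π a probability on X × Y with first marginal in C } = inf{ KL(π ‖ Q_X) : π ∈ C }. -/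
open MeasureTheory ProbabilityTheory Classical

open scoped ENNReal

section Aux

open Real

variable {α : Type*} {mα : MeasurableSpace α}

lemma KLaux.lintegral_inv_rnDeriv {μ ν : Measure α} [SigmaFinite μ] [SigmaFinite ν]
    (hμν : μ ≪ ν) :
    ∫⁻ x, (μ.rnDeriv ν x)⁻¹ ∂μ
      = ν {x | μ.rnDeriv ν x ≠ 0 ∧ μ.rnDeriv ν x ≠ ∞} := by
  have hrm : Measurable (μ.rnDeriv ν) := Measure.measurable_rnDeriv μ ν
  have hS : MeasurableSet {x | μ.rnDeriv ν x ≠ 0 ∧ μ.rnDeriv ν x ≠ ∞} :=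
    MeasurableSet.inter ((hrm (measurableSet_singleton 0)).compl)
      ((hrm (measurableSet_singleton ∞)).compl)
  nth_rewrite 1 [← Measure.withDensity_rnDeriv_eq μ ν hμν]
  rw [lintegral_withDensity_eq_lintegral_mul ν hrm
    (show Measurable (fun x => (μ.rnDeriv ν x)⁻¹) from hrm.inv)]
  have heq : (fun x => (μ.rnDeriv ν * fun x => (μ.rnDeriv ν x)⁻¹) x)
      = {x | μ.rnDeriv ν x ≠ 0 ∧ μ.rnDeriv ν x ≠ ∞}.indicator (fun _ => (1 : ℝ≥0∞)) := by
    funext x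
    by_cases h0 : μ.rnDeriv ν x = 0
    · simp [Set.indicator, h0]
    by_cases h' : μ.rnDeriv ν x = ∞
    · simp [Set.indicator, h']
    · simp [Set.indicator, h0, h', ENNReal.mul_inv_cancel h0 h']
  rw [heq, lintegral_indicator hS, setLIntegral_one]

lemma KLaux.integral_inv_rnDeriv {μ ν : Measure α} [IsProbabilityMeasure μ]
    [IsProbabilityMeasure ν] (hμν : μ ≪ ν) :
    Integrable (fun x => ((μ.rnDeriv ν x).toReal)⁻¹) μ ∧
    ∫ x, ((μ.rnDeriv ν x).toReal)⁻¹ ∂μ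
      = (ν {x | μ.rnDeriv ν x ≠ 0 ∧ μ.rnDeriv ν x ≠ ∞}).toReal := by
  have hrm : Measurable (μ.rnDeriv ν) := Measure.measurable_rnDeriv μ ν
  have hf : Measurable fun x => ((μ.rnDeriv ν x).toReal)⁻¹ := hrm.ennreal_toReal.inv
  have h0 : ∀ᵐ x ∂μ, 0 < μ.rnDeriv ν x := Measure.rnDeriv_pos hμν
  have htop : ∀ᵐ x ∂μ, μ.rnDeriv ν x < ∞ := hμν.ae_le (Measure.rnDeriv_lt_top μ ν)
  have hae : ∀ᵐ x ∂μ, ENNReal.ofReal (((μ.rnDeriv ν x).toReal)⁻¹) = (μ.rnDeriv ν x)⁻¹ := by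
    filter_upwards [h0, htop] with x h1 h2
    rw [ENNReal.ofReal_inv_of_pos (ENNReal.toReal_pos h1.ne' h2.ne),
      ENNReal.ofReal_toReal h2.ne]
  have hnn : 0 ≤ᵐ[μ] fun x => ((μ.rnDeriv ν x).toReal)⁻¹ :=
    Filter.Eventually.of_forall fun x => by positivity
  have hlint : ∫⁻ x, ENNReal.ofReal (((μ.rnDeriv ν x).toReal)⁻¹) ∂μ
      = ν {x | μ.rnDeriv ν x ≠ 0 ∧ μ.rnDeriv ν x ≠ ∞} := by
    rw [lintegral_congr_ae hae, KLaux.lintegral_inv_rnDeriv hμν]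
  constructor
  · refine ⟨hf.aestronglyMeasurable, ?_⟩
    rw [hasFiniteIntegral_iff_ofReal hnn, hlint]
    exact measure_lt_top _ _
  · rw [integral_eq_lintegral_of_nonneg_ae hnn hf.aestronglyMeasurable, hlint]

lemma KLaux.llr_ge {μ ν : Measure α} [SigmaFinite μ] [SigmaFinite ν] (hμν : μ ≪ ν) :
    ∀ᵐ x ∂μ, 1 - ((μ.rnDeriv ν x).toReal)⁻¹ ≤ llr μ ν x := by
  filter_upwards [Measure.rnDeriv_pos hμν, hμν.ae_le (Measure.rnDeriv_lt_top μ ν)]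
    with x h1 h2
  have ht : 0 < (μ.rnDeriv ν x).toReal := ENNReal.toReal_pos h1.ne' h2.ne
  have hlog := Real.log_le_sub_one_of_pos (inv_pos.mpr ht)
  rw [Real.log_inv] at hlog
  simp only [llr]
  linarith

lemma KLaux.gibbs {μ ν : Measure α} [IsProbabilityMeasure μ] [IsProbabilityMeasure ν]
    (hμν : μ ≪ ν) (hint : Integrable (llr μ ν) μ) :
    0 ≤ ∫ x, llr μ ν x ∂μ ∧ (∫ x, llr μ ν x ∂μ = 0 → μ = ν) := by
  obtain ⟨hfint, hfval⟩ := KLaux.integral_inv_rnDeriv hμν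
  have hrm : Measurable (μ.rnDeriv ν) := Measure.measurable_rnDeriv μ ν
  have hkey := KLaux.llr_ge hμν
  have hfle : ∫ x, ((μ.rnDeriv ν x).toReal)⁻¹ ∂μ ≤ 1 := by
    rw [hfval]
    exact ENNReal.toReal_le_of_le_ofReal zero_le_one (by simpa using prob_le_one)
  have hsubint : Integrable (fun x => 1 - ((μ.rnDeriv ν x).toReal)⁻¹) μ :=
    (integrable_const 1).sub hfint
  have hsub : ∫ x, (1 - ((μ.rnDeriv ν x).toReal)⁻¹) ∂μ
      = 1 - ∫ x, ((μ.rnDeriv ν x).toReal)⁻¹ ∂μ := by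
    rw [integral_sub (integrable_const 1) hfint]
    simp
  have hmono : ∫ x, (1 - ((μ.rnDeriv ν x).toReal)⁻¹) ∂μ ≤ ∫ x, llr μ ν x ∂μ :=
    integral_mono_ae hsubint hint hkey
  have h1 : 0 ≤ ∫ x, llr μ ν x ∂μ := by rw [hsub] at hmono; linarith
  refine ⟨h1, fun hz => ?_⟩
  set φ : α → ℝ := fun x => ((μ.rnDeriv ν x).toReal)⁻¹ - 1 + llr μ ν x with hφ
  have hφnn : 0 ≤ᵐ[μ] φ := by
    filter_upwards [hkey] with x hx
    simp only [hφ, Pi.zero_apply]; linarith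
  have hφint : Integrable φ μ := (hfint.sub (integrable_const 1)).add hint
  have hfm1 : Integrable (fun x => ((μ.rnDeriv ν x).toReal)⁻¹ - 1) μ :=
    hfint.sub (integrable_const 1)
  have hφval : ∫ x, φ x ∂μ = ∫ x, ((μ.rnDeriv ν x).toReal)⁻¹ ∂μ - 1 := by
    simp only [hφ]
    rw [integral_add hfm1 hint, hz, integral_sub hfint (integrable_const 1)]
    simp
  have hφ0 : ∫ x, φ x ∂μ = 0 := by
    have hge : 0 ≤ ∫ x, φ x ∂μ := integral_nonneg_of_ae hφnn
    rw [hφval] at hge ⊢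
    linarith
  have hfone : ∫ x, ((μ.rnDeriv ν x).toReal)⁻¹ ∂μ = 1 := by
    rw [hφval] at hφ0; linarith
  have hφae : φ =ᵐ[μ] 0 := (integral_eq_zero_iff_of_nonneg_ae hφnn hφint).mp hφ0
  have hr1 : ∀ᵐ x ∂μ, μ.rnDeriv ν x = 1 := by
    filter_upwards [hφae, Measure.rnDeriv_pos hμν, hμν.ae_le (Measure.rnDeriv_lt_top μ ν)]
      with x hx h1x h2x
    have ht : 0 < (μ.rnDeriv ν x).toReal := ENNReal.toReal_pos h1x.ne' h2x.ne
    have hu : 0 < ((μ.rnDeriv ν x).toReal)⁻¹ := inv_pos.mpr ht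
    by_contra hne
    have htne : (μ.rnDeriv ν x).toReal ≠ 1 := by
      intro hone
      apply hne
      rw [← ENNReal.ofReal_toReal h2x.ne, hone]; simp
    have hune : ((μ.rnDeriv ν x).toReal)⁻¹ ≠ 1 := by
      simpa [inv_eq_one] using htne
    have hlt := Real.log_lt_sub_one_of_pos hu hune
    rw [Real.log_inv] at hlt
    have hx0 : φ x = 0 := hx
    simp only [hφ, llr] at hx0
    linarith
  have hS : MeasurableSet {x | μ.rnDeriv ν x ≠ 0 ∧ μ.rnDeriv ν x ≠ ∞} :=
    MeasurableSet.inter ((hrm (measurableSet_singleton 0)).compl)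
      ((hrm (measurableSet_singleton ∞)).compl)
  have hνS : ν {x | μ.rnDeriv ν x ≠ 0 ∧ μ.rnDeriv ν x ≠ ∞} = 1 := by
    rw [hfone] at hfval
    exact (ENNReal.toReal_eq_one_iff _).mp hfval.symm
  have hνSc : ν {x | μ.rnDeriv ν x ≠ 0 ∧ μ.rnDeriv ν x ≠ ∞}ᶜ = 0 :=
    (prob_compl_eq_zero_iff hS).mpr hνS
  have hA : MeasurableSet {x | μ.rnDeriv ν x ≠ 1} := (hrm (measurableSet_singleton 1)).compl
  have hμA : μ {x | μ.rnDeriv ν x ≠ 1} = 0 := ae_iff.mp hr1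
  have hwd : μ = ν.withDensity (μ.rnDeriv ν) := (Measure.withDensity_rnDeriv_eq μ ν hμν).symm
  have hAint : ∫⁻ x in {x | μ.rnDeriv ν x ≠ 1}, μ.rnDeriv ν x ∂ν = 0 := by
    rw [← withDensity_apply _ hA, ← hwd]
    exact hμA
  have hr0A : ∀ᵐ x ∂ν, x ∈ {x | μ.rnDeriv ν x ≠ 1} → μ.rnDeriv ν x = 0 := by
    have h' : μ.rnDeriv ν =ᵐ[ν.restrict {x | μ.rnDeriv ν x ≠ 1}] 0 :=
      (lintegral_eq_zero_iff hrm).mp hAint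
    exact (ae_restrict_iff' hA).mp h'
  have hScae : ∀ᵐ x ∂ν, μ.rnDeriv ν x ≠ 0 ∧ μ.rnDeriv ν x ≠ ∞ := by
    rw [ae_iff, ← Set.compl_setOf]
    exact hνSc
  have hr1ν : μ.rnDeriv ν =ᵐ[ν] (fun _ => (1 : ℝ≥0∞)) := by
    filter_upwards [hr0A, hScae] with x hx hS'
    by_contra hne
    exact hS'.1 (hx hne)
  calc μ = ν.withDensity (μ.rnDeriv ν) := hwd
    _ = ν.withDensity (fun _ => (1 : ℝ≥0∞)) := withDensity_congr_ae hr1ν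
    _ = ν := by
        have : (fun _ : α => (1 : ℝ≥0∞)) = (1 : α → ℝ≥0∞) := rfl
        rw [this, withDensity_one]

variable {X Y : Type*} [MeasurableSpace X] [MeasurableSpace Y]

lemma KLaux.withDensity_compProd_eq (ν : Measure X) [SFinite ν] (κ : Kernel X Y)
    [IsSFiniteKernel κ] {f : X → ℝ≥0∞} (hf : Measurable f) :
    (ν.withDensity f) ⊗ₘ κ = (ν ⊗ₘ κ).withDensity (fun p => f p.1) := by
  ext s hs
  rw [Measure.compProd_apply hs, withDensity_apply _ hs,
    lintegral_withDensity_eq_lintegral_mul ν hf (Kernel.measurable_kernel_prodMk_left hs)]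
  have hres : ∫⁻ p in s, f p.1 ∂(ν ⊗ₘ κ) = ∫⁻ p, s.indicator (fun p : X × Y => f p.1) p ∂(ν ⊗ₘ κ) := by
    rw [lintegral_indicator hs]
  have hm : Measurable (s.indicator (fun p : X × Y => f p.1)) :=
    (hf.comp measurable_fst).indicator hs
  rw [hres, Measure.lintegral_compProd hm]
  apply lintegral_congr
  intro x
  have hind : ∀ y, s.indicator (fun p : X × Y => f p.1) (x, y)
      = (Prod.mk x ⁻¹' s).indicator (fun _ => f x) y := by
    intro y; by_cases h : (x, y) ∈ s <;> simp [Set.indicator, h]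
  simp_rw [hind]
  rw [lintegral_indicator (measurable_prodMk_left hs), setLIntegral_const]
  simp [mul_comm]

lemma KLaux.ae_fst_of_ae {P : Measure (X × Y)} {p : X → Prop} (hp : MeasurableSet {x | p x})
    (h : ∀ᵐ x ∂P.fst, p x) : ∀ᵐ q ∂P, p q.1 := by
  have he : P.fst = P.map Prod.fst := rfl
  rw [he] at h
  exact (ae_map_iff measurable_fst.aemeasurable hp).mp h

lemma KLaux.integrable_fst_iff {P : Measure (X × Y)} {g : X → ℝ} (hg : Measurable g) :
    Integrable (fun q : X × Y => g q.1) P ↔ Integrable g P.fst := by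
  have he : P.fst = P.map Prod.fst := rfl
  rw [he, integrable_map_measure hg.aestronglyMeasurable measurable_fst.aemeasurable]
  rfl

lemma KLaux.integral_fst_eq {P : Measure (X × Y)} {g : X → ℝ} (hg : Measurable g) :
    ∫ q, g q.1 ∂P = ∫ x, g x ∂P.fst := by
  have he : P.fst = P.map Prod.fst := rfl
  rw [he, integral_map measurable_fst.aemeasurable hg.aestronglyMeasurable]

lemma KLaux.KL_compProd_right (μ ν : Measure X) [IsProbabilityMeasure μ]
    [IsProbabilityMeasure ν] (κ : Kernel X Y) [IsMarkovKernel κ] :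
    KL (μ ⊗ₘ κ) (ν ⊗ₘ κ) = KL μ ν := by
  have hfst : (μ ⊗ₘ κ).fst = μ := Measure.fst_compProd μ κ
  by_cases hμν : μ ≪ ν
  · have hhm : Measurable (μ.rnDeriv ν) := Measure.measurable_rnDeriv μ ν
    have hkey : μ ⊗ₘ κ = (ν ⊗ₘ κ).withDensity (fun p => μ.rnDeriv ν p.1) := by
      rw [← KLaux.withDensity_compProd_eq ν κ hhm, Measure.withDensity_rnDeriv_eq μ ν hμν]
    have hac : μ ⊗ₘ κ ≪ ν ⊗ₘ κ := hkey ▸ withDensity_absolutelyContinuous _ _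
    have hrn : (μ ⊗ₘ κ).rnDeriv (ν ⊗ₘ κ) =ᵐ[ν ⊗ₘ κ] fun p => μ.rnDeriv ν p.1 :=
      hkey ▸ Measure.rnDeriv_withDensity _ (hhm.comp measurable_fst)
    have hllr : llr (μ ⊗ₘ κ) (ν ⊗ₘ κ) =ᵐ[μ ⊗ₘ κ] fun p => llr μ ν p.1 := by
      filter_upwards [hac.ae_le hrn] with p hp
      rw [llr, hp]
      rfl
    have hint : Integrable (llr (μ ⊗ₘ κ) (ν ⊗ₘ κ)) (μ ⊗ₘ κ) ↔ Integrable (llr μ ν) μ := by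
      rw [integrable_congr hllr, KLaux.integrable_fst_iff (measurable_llr μ ν), hfst]
    by_cases hi : Integrable (llr μ ν) μ
    · rw [KL, if_pos ⟨hac, hint.mpr hi⟩, KL, if_pos ⟨hμν, hi⟩]
      congr 1
      rw [integral_congr_ae hllr, KLaux.integral_fst_eq (measurable_llr μ ν), hfst]
    · rw [KL, if_neg (fun hcon => hi (hint.mp hcon.2)), KL, if_neg (fun hcon => hi hcon.2)]
  · have hac : ¬ (μ ⊗ₘ κ ≪ ν ⊗ₘ κ) := by
      intro h
      apply hμν
      have h2 := h.map measurable_fst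
      have e1 : (μ ⊗ₘ κ).map Prod.fst = μ := hfst
      have e2 : (ν ⊗ₘ κ).map Prod.fst = ν := Measure.fst_compProd ν κ
      rwa [e1, e2] at h2
    rw [KL, if_neg (fun hcon => hac hcon.1), KL, if_neg (fun hcon => hμν hcon.1)]

lemma KLaux.KL_fst_le (ν : Measure X) [IsProbabilityMeasure ν] (κ : Kernel X Y)
    [IsMarkovKernel κ] (P : Measure (X × Y)) [IsProbabilityMeasure P] :
    KL P.fst ν ≤ KL P (ν ⊗ₘ κ) ∧
      (KL P (ν ⊗ₘ κ) = KL P.fst ν → KL P.fst ν ≠ ∞ → P = P.fst ⊗ₘ κ) := by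
  by_cases hPQ : P ≪ ν ⊗ₘ κ ∧ Integrable (llr P (ν ⊗ₘ κ)) P
  · obtain ⟨hac, hint⟩ := hPQ
    have hfstQ : (ν ⊗ₘ κ).fst = ν := Measure.fst_compProd ν κ
    have hμν : P.fst ≪ ν := by
      have h2 := hac.map measurable_fst
      have e2 : (ν ⊗ₘ κ).map Prod.fst = ν := hfstQ
      rw [e2] at h2
      exact h2
    have hhm : Measurable ((P.fst).rnDeriv ν) := Measure.measurable_rnDeriv _ ν
    have hkey : P.fst ⊗ₘ κ = (ν ⊗ₘ κ).withDensity (fun p => (P.fst).rnDeriv ν p.1) := by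
      rw [← KLaux.withDensity_compProd_eq ν κ hhm, Measure.withDensity_rnDeriv_eq _ ν hμν]
    have hP'ac : P.fst ⊗ₘ κ ≪ ν ⊗ₘ κ := hkey ▸ withDensity_absolutelyContinuous _ _
    have hrnP' : (P.fst ⊗ₘ κ).rnDeriv (ν ⊗ₘ κ) =ᵐ[ν ⊗ₘ κ] fun p => (P.fst).rnDeriv ν p.1 :=
      hkey ▸ Measure.rnDeriv_withDensity _ (hhm.comp measurable_fst)
    -- P ≪ P.fst ⊗ₘ κ
    have hμh0 : P.fst {x | (P.fst).rnDeriv ν x = 0} = 0 := by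
      have hms : MeasurableSet {x | (P.fst).rnDeriv ν x = 0} := hhm (measurableSet_singleton 0)
      have hwde : P.fst {x | (P.fst).rnDeriv ν x = 0}
          = (ν.withDensity ((P.fst).rnDeriv ν)) {x | (P.fst).rnDeriv ν x = 0} := by
        rw [Measure.withDensity_rnDeriv_eq _ ν hμν]
      rw [hwde, withDensity_apply _ hms]
      rw [setLIntegral_congr_fun hms (fun x hx => hx)]
      simp
    have hPP' : P ≪ P.fst ⊗ₘ κ := by
      rw [hkey]
      refine Measure.AbsolutelyContinuous.mk fun s hs hs0 => ?_
      rw [withDensity_apply _ hs] at hs0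
      have hae : ∀ᵐ p ∂(ν ⊗ₘ κ), p ∈ s → (P.fst).rnDeriv ν p.1 = 0 := by
        have h' := (lintegral_eq_zero_iff (hhm.comp measurable_fst)).mp hs0
        exact (ae_restrict_iff' hs).mp h'
      have hTm : MeasurableSet {p : X × Y | (P.fst).rnDeriv ν p.1 = 0} :=
        (hhm.comp measurable_fst) (measurableSet_singleton 0)
      have hPT : P {p : X × Y | (P.fst).rnDeriv ν p.1 = 0} = 0 := by
        have he : {p : X × Y | (P.fst).rnDeriv ν p.1 = 0}
            = Prod.fst ⁻¹' {x | (P.fst).rnDeriv ν x = 0} := rfl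
        have hfa := Measure.fst_apply (ρ := P)
          (hhm (measurableSet_singleton 0) : MeasurableSet {x | (P.fst).rnDeriv ν x = 0})
        rw [he]
        show P (Prod.fst ⁻¹' ((P.fst).rnDeriv ν ⁻¹' {0})) = 0
        rw [← hfa]
        exact hμh0
      have hQdiff : (ν ⊗ₘ κ) (s \ {p : X × Y | (P.fst).rnDeriv ν p.1 = 0}) = 0 := by
        refine measure_mono_null ?_ (ae_iff.mp hae)
        intro p hp
        simp only [Set.mem_diff, Set.mem_setOf_eq] at hp ⊢
        tauto
      have hPdiff : P (s \ {p : X × Y | (P.fst).rnDeriv ν p.1 = 0}) = 0 := hac hQdiff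
      refine le_antisymm ?_ zero_le
      calc P s ≤ P ({p : X × Y | (P.fst).rnDeriv ν p.1 = 0}
            ∪ (s \ {p : X × Y | (P.fst).rnDeriv ν p.1 = 0})) := by
            apply measure_mono
            intro p hp
            by_cases h : (P.fst).rnDeriv ν p.1 = 0
            · exact Or.inl h
            · exact Or.inr ⟨hp, h⟩
        _ ≤ P {p : X × Y | (P.fst).rnDeriv ν p.1 = 0}
            + P (s \ {p : X × Y | (P.fst).rnDeriv ν p.1 = 0}) := measure_union_le _ _
        _ = 0 := by rw [hPT, hPdiff, add_zero]
    -- decomposition of llr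
    have hchain := Measure.rnDeriv_mul_rnDeriv (κ := ν ⊗ₘ κ) hPP'
    have hrpos := Measure.rnDeriv_pos hPP'
    have hrfin := hPP'.ae_le (Measure.rnDeriv_lt_top P (P.fst ⊗ₘ κ))
    have hhpos : ∀ᵐ p ∂P, 0 < (P.fst).rnDeriv ν p.1 :=
      KLaux.ae_fst_of_ae (hhm measurableSet_Ioi) (Measure.rnDeriv_pos hμν)
    have hhfin : ∀ᵐ p ∂P, (P.fst).rnDeriv ν p.1 < ∞ :=
      KLaux.ae_fst_of_ae (hhm measurableSet_Iio) (hμν.ae_le (Measure.rnDeriv_lt_top _ ν))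
    have hdecomp : ∀ᵐ p ∂P, llr P (ν ⊗ₘ κ) p = llr P (P.fst ⊗ₘ κ) p + llr P.fst ν p.1 := by
      filter_upwards [hac.ae_le hchain, hac.ae_le hrnP', hrpos, hrfin, hhpos, hhfin]
        with p h1 h2 h3 h4 h5 h6
      simp only [llr]
      rw [← h1, Pi.mul_apply, h2, ENNReal.toReal_mul, Real.log_mul]
      · exact (ENNReal.toReal_pos h3.ne' h4.ne).ne'
      · exact (ENNReal.toReal_pos h5.ne' h6.ne).ne'
    -- integrability
    obtain ⟨hfint, -⟩ := KLaux.integral_inv_rnDeriv hPP'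
    obtain ⟨hgint0, -⟩ := KLaux.integral_inv_rnDeriv hμν
    have hgint : Integrable (fun p : X × Y => (((P.fst).rnDeriv ν p.1).toReal)⁻¹) P :=
      (KLaux.integrable_fst_iff hhm.ennreal_toReal.inv).mpr hgint0
    have hWlow := KLaux.llr_ge hPP'
    have hZlow : ∀ᵐ p ∂P, 1 - (((P.fst).rnDeriv ν p.1).toReal)⁻¹ ≤ llr P.fst ν p.1 := by
      refine KLaux.ae_fst_of_ae ?_ (KLaux.llr_ge hμν)
      exact measurableSet_le (measurable_const.sub hhm.ennreal_toReal.inv)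
        (measurable_llr _ _)
    have hWup : ∀ᵐ p ∂P, llr P (P.fst ⊗ₘ κ) p
        ≤ llr P (ν ⊗ₘ κ) p - (1 - (((P.fst).rnDeriv ν p.1).toReal)⁻¹) := by
      filter_upwards [hdecomp, hZlow] with p h1 h2
      linarith
    have hWint : Integrable (llr P (P.fst ⊗ₘ κ)) P := by
      refine integrable_of_le_of_le (measurable_llr _ _).aestronglyMeasurable ?_ ?_
        ((integrable_const 1).sub hfint) (hint.sub ((integrable_const 1).sub hgint))
      · exact hWlow
      · exact hWup
    have hZae : (fun p : X × Y => llr P.fst ν p.1)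
        =ᵐ[P] fun p => llr P (ν ⊗ₘ κ) p - llr P (P.fst ⊗ₘ κ) p := by
      filter_upwards [hdecomp] with p hp
      linarith
    have hZint : Integrable (fun p : X × Y => llr P.fst ν p.1) P :=
      (hint.sub hWint).congr hZae.symm
    have hllrint : Integrable (llr P.fst ν) P.fst :=
      (KLaux.integrable_fst_iff (measurable_llr _ ν)).mp hZint
    have hintegral : ∫ p, llr P (ν ⊗ₘ κ) p ∂P
        = ∫ p, llr P (P.fst ⊗ₘ κ) p ∂P + ∫ x, llr P.fst ν x ∂P.fst := by
      rw [← KLaux.integral_fst_eq (measurable_llr _ ν), ← integral_add hWint hZint]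
      exact integral_congr_ae hdecomp
    have hW0 : 0 ≤ ∫ p, llr P (P.fst ⊗ₘ κ) p ∂P := (KLaux.gibbs hPP' hWint).1
    have hZ0 : 0 ≤ ∫ x, llr P.fst ν x ∂P.fst := (KLaux.gibbs hμν hllrint).1
    constructor
    · rw [KL, if_pos ⟨hμν, hllrint⟩, KL, if_pos ⟨hac, hint⟩]
      apply ENNReal.ofReal_le_ofReal
      rw [hintegral]
      linarith
    · intro heq _
      rw [KL, if_pos ⟨hac, hint⟩, KL, if_pos ⟨hμν, hllrint⟩] at heq
      have hieq : ∫ p, llr P (ν ⊗ₘ κ) p ∂P = ∫ x, llr P.fst ν x ∂P.fst :=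
        (ENNReal.ofReal_eq_ofReal_iff (by rw [hintegral]; linarith) hZ0).mp heq
      have hWzero : ∫ p, llr P (P.fst ⊗ₘ κ) p ∂P = 0 := by
        rw [hintegral] at hieq
        linarith
      exact (KLaux.gibbs hPP' hWint).2 hWzero
  · have hKL : KL P (ν ⊗ₘ κ) = ∞ := by rw [KL, if_neg hPQ]
    refine ⟨hKL ▸ le_top, fun heq hne => absurd (hKL.symm.trans heq).symm hne⟩

end Aux

/-- Among all probability measures `P` on `X × Y` with first marginal `μ`, the divergence
`KL(P ‖ Q)` (for `Q = Q.fst ⊗ₘ κQ`) is minimised by `P* = μ ⊗ₘ κQ`, with minimal value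
`KL(μ ‖ Q.fst)`; the minimiser is unique whenever `KL(μ ‖ Q.fst) < ∞`.  Consequently the
infimum of `KL(· ‖ Q)` over probability measures whose first marginal lies in a set `C`
equals the infimum of `KL(· ‖ Q.fst)` over `C`. -/
theorem kl_min_given_first_marginal
    {X Y : Type*} [MeasurableSpace X] [MeasurableSpace Y]
    [StandardBorelSpace X] [StandardBorelSpace Y]
    (Q : Measure (X × Y)) [IsProbabilityMeasure Q]
    (κQ : Kernel X Y) [IsMarkovKernel κQ]
    (hQ : Q = Q.fst ⊗ₘ κQ)
    (μ : Measure X) [IsProbabilityMeasure μ] :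
    (∀ P : Measure (X × Y), IsProbabilityMeasure P → P.fst = μ →
        KL (μ ⊗ₘ κQ) Q ≤ KL P Q) ∧
    KL (μ ⊗ₘ κQ) Q = KL μ Q.fst ∧
    (KL μ Q.fst < ∞ → ∀ P : Measure (X × Y), IsProbabilityMeasure P → P.fst = μ →
        KL P Q = KL μ Q.fst → P = μ ⊗ₘ κQ) ∧
    (∀ C : Set (Measure X), (∀ π ∈ C, IsProbabilityMeasure π) →
      (⨅ (P : Measure (X × Y)) (_ : IsProbabilityMeasure P) (_ : P.fst ∈ C), KL P Q) =
        ⨅ (π : Measure X) (_ : π ∈ C), KL π Q.fst) := by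
  have hval : KL (μ ⊗ₘ κQ) Q = KL μ Q.fst := by
    conv_lhs => rw [hQ]
    exact KLaux.KL_compProd_right μ Q.fst κQ
  refine ⟨?_, hval, ?_, ?_⟩
  · intro P hP hPfst
    haveI := hP
    rw [hval, ← hPfst]
    have h := (KLaux.KL_fst_le Q.fst κQ P).1
    rwa [← hQ] at h
  · intro hfin P hP hPfst hPKL
    haveI := hP
    have h2 := (KLaux.KL_fst_le Q.fst κQ P).2
    rw [← hQ, hPfst] at h2
    exact h2 hPKL hfin.ne
  · intro C hC
    apply le_antisymm
    · refine le_iInf fun π => le_iInf fun hπ => ?_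
      haveI := hC π hπ
      have h1 : KL (π ⊗ₘ κQ) Q = KL π Q.fst := by
        conv_lhs => rw [hQ]
        exact KLaux.KL_compProd_right π Q.fst κQ
      have hmem : (π ⊗ₘ κQ).fst ∈ C := by
        rw [Measure.fst_compProd]; exact hπ
      exact le_trans
        (iInf_le_of_le (π ⊗ₘ κQ) (iInf_le_of_le inferInstance (iInf_le _ hmem))) h1.le
    · refine le_iInf fun P => le_iInf fun hP => le_iInf fun hPC => ?_
      haveI := hP
      have h2 := (KLaux.KL_fst_le Q.fst κQ P).1
      rw [← hQ] at h2
      exact le_trans (iInf_le_of_le P.fst (iInf_le _ hPC)) h2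
end

section
/- Let X, Z, Y be standard Borel spaces. Let q be a probability measure on Z and κ_X, κ_Y Markov kernels from Z to X and from Z to Y, and let Q be the probability measure on X × Z × Y which is the law of (ξ, ζ, η) where ζ ∼ q and, given ζ, the coordinates ξ ∼ κ_X(ζ) and η ∼ κ_Y(ζ) are conditionally independent. Let μ be a probability measure on Z and ρ_X, ρ_Y Markov kernels from Z to X and from Z to Y, and let C be the set of probability measures P on X × Z × Y whose Z-marginal equals μ and whose regular conditional distribution of the X-coordinate given the Z-coordinate equals ρ_X and of the Y-coordinate given the Z-coordinate equals ρ_Y, μ-almost everywhere. Let P* ∈ C be the conditionally independent element of C (the law of (ξ, ζ, η) with ζ ∼ μ and, given ζ, ξ ∼ ρ_X(ζ) and η ∼ ρ_Y(ζ) independent). Then KL(P* ‖ Q) ≤ KL(P ‖ Q) for every P ∈ C, and if KL(P* ‖ Q) < ∞ then P* is the unique minimiser: KL(P ‖ Q) = KL(P* ‖ Q) with P ∈ C implies P = P*. -/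
open MeasureTheory ProbabilityTheory Classical

open scoped ENNReal

/-- The joint law on `X × Z × Y` of `(ξ, ζ, η)` where `ζ ∼ m` and, given `ζ`, the coordinates
`ξ ∼ κX(ζ)` and `η ∼ κY(ζ)` are conditionally independent. -/
noncomputable def condIndepLaw {X Z Y : Type*}
    [MeasurableSpace X] [MeasurableSpace Z] [MeasurableSpace Y]
    (m : Measure Z) (κX : Kernel Z X) (κY : Kernel Z Y) : Measure (X × Z × Y) :=
  (m ⊗ₘ (κX ×ₖ κY)).map (fun p => (p.2.1, p.1, p.2.2))

open Real

section AuxReal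

lemma aux_abs_le {a b c : ℝ} (h : a = c - b) :
    |a| ≤ |c| + max (-b) 0 + 2 * max (-a) 0 := by
  rcases le_or_gt 0 a with ha | ha
  · rw [abs_of_nonneg ha]
    have : a ≤ |c| + max (-b) 0 := by
      rw [h]
      have h1 : c ≤ |c| := le_abs_self c
      have h2 : -b ≤ max (-b) 0 := le_max_left _ _
      linarith
    have : 0 ≤ 2 * max (-a) 0 := by positivity
    linarith
  · rw [abs_of_neg ha]
    have h1 : -a ≤ max (-a) 0 := le_max_left _ _
    have h2 : (0:ℝ) ≤ |c| := abs_nonneg _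
    have h3 : (0:ℝ) ≤ max (-b) 0 := le_max_right _ _
    linarith

variable {α : Type*} [MeasurableSpace α] {μ ν : Measure α}

lemma aux_integrable_of_sum {f g : α → ℝ} (hmf : AEStronglyMeasurable f μ)
    (hsum : Integrable (fun x => f x + g x) μ)
    (hf : Integrable (fun x => max (-f x) 0) μ)
    (hg : Integrable (fun x => max (-g x) 0) μ) : Integrable f μ := by
  refine Integrable.mono' ((hsum.abs.add hg).add (hf.const_mul 2)) hmf (ae_of_all _ fun x => ?_)
  have h := aux_abs_le (a := f x) (b := g x) (c := f x + g x) (by ring)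
  simpa [Real.norm_eq_abs, mul_comm] using h

lemma aux_lintegral_inv_rnDeriv (hμν : μ ≪ ν) [IsFiniteMeasure μ] [IsFiniteMeasure ν] :
    ∫⁻ x, (μ.rnDeriv ν x)⁻¹ ∂μ
      = ν {x | μ.rnDeriv ν x ≠ 0 ∧ μ.rnDeriv ν x ≠ ∞} := by
  have hkey : ∫⁻ x, (μ.rnDeriv ν x)⁻¹ ∂(ν.withDensity (μ.rnDeriv ν))
      = ∫⁻ x, (μ.rnDeriv ν * fun x => (μ.rnDeriv ν x)⁻¹) x ∂ν :=
    lintegral_withDensity_eq_lintegral_mul _ (Measure.measurable_rnDeriv μ ν)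
      (Measure.measurable_rnDeriv μ ν).inv
  rw [Measure.withDensity_rnDeriv_eq μ ν hμν] at hkey
  rw [hkey]
  have hset : MeasurableSet {x | μ.rnDeriv ν x ≠ 0 ∧ μ.rnDeriv ν x ≠ ∞} := by
    refine ((Measure.measurable_rnDeriv μ ν) (measurableSet_singleton 0)).compl.inter ?_
    exact ((Measure.measurable_rnDeriv μ ν) (measurableSet_singleton ∞)).compl
  rw [← lintegral_indicator_one hset]
  refine lintegral_congr fun x => ?_
  by_cases h0 : μ.rnDeriv ν x = 0
  · simp [h0]
  by_cases ht : μ.rnDeriv ν x = ∞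
  · simp [ht]
  · simp [Set.indicator_apply, h0, ht, ENNReal.mul_inv_cancel h0 ht]

lemma aux_integrable_inv_rnDeriv (hμν : μ ≪ ν) [IsProbabilityMeasure μ] [IsProbabilityMeasure ν] :
    Integrable (fun x => ((μ.rnDeriv ν x)⁻¹).toReal) μ := by
  refine integrable_toReal_of_lintegral_ne_top (Measure.measurable_rnDeriv μ ν).inv.aemeasurable ?_
  rw [aux_lintegral_inv_rnDeriv hμν]
  exact (measure_lt_top _ _).ne

lemma aux_integral_inv_rnDeriv (hμν : μ ≪ ν) [IsProbabilityMeasure μ] [IsProbabilityMeasure ν] :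
    ∫ x, ((μ.rnDeriv ν x)⁻¹).toReal ∂μ
      = (ν {x | μ.rnDeriv ν x ≠ 0 ∧ μ.rnDeriv ν x ≠ ∞}).toReal := by
  rw [integral_toReal (f := fun x => (μ.rnDeriv ν x)⁻¹) (Measure.measurable_rnDeriv μ ν).inv.aemeasurable ?_,
    aux_lintegral_inv_rnDeriv hμν]
  filter_upwards [Measure.rnDeriv_pos hμν] with x hx
  exact ENNReal.inv_lt_top.mpr hx

lemma aux_neg_llr_le (hμν : μ ≪ ν) [IsProbabilityMeasure μ] [IsProbabilityMeasure ν] :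
    ∀ᵐ x ∂μ, max (-(llr μ ν x)) 0 ≤ ((μ.rnDeriv ν x)⁻¹).toReal := by
  filter_upwards [Measure.rnDeriv_pos hμν, hμν.ae_le (Measure.rnDeriv_lt_top μ ν)]
    with x hpos hlt
  have ht : 0 < (μ.rnDeriv ν x).toReal := ENNReal.toReal_pos hpos.ne' hlt.ne
  rw [ENNReal.toReal_inv]
  have h1 : -(llr μ ν x) ≤ (μ.rnDeriv ν x).toReal⁻¹ := by
    have := Real.log_le_sub_one_of_pos (inv_pos.mpr ht)
    rw [Real.log_inv] at this
    simp only [llr]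
    linarith
  have h2 : (0:ℝ) ≤ (μ.rnDeriv ν x).toReal⁻¹ := by positivity
  exact max_le h1 h2

lemma aux_integrable_neg_llr (hμν : μ ≪ ν) [IsProbabilityMeasure μ] [IsProbabilityMeasure ν] :
    Integrable (fun x => max (-(llr μ ν x)) 0) μ := by
  refine Integrable.mono' (aux_integrable_inv_rnDeriv hμν)
    ((measurable_llr μ ν).neg.max measurable_const).aestronglyMeasurable ?_
  filter_upwards [aux_neg_llr_le hμν] with x hx
  rwa [Real.norm_eq_abs, abs_of_nonneg (le_max_right _ _)]

/-- Gibbs' inequality with equality case. -/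
lemma aux_gibbs (hμν : μ ≪ ν) [IsProbabilityMeasure μ] [IsProbabilityMeasure ν]
    (hint : Integrable (llr μ ν) μ) :
    0 ≤ ∫ x, llr μ ν x ∂μ ∧ (∫ x, llr μ ν x ∂μ = 0 → μ = ν) := by
  set r := μ.rnDeriv ν with hr
  have hrm : Measurable r := Measure.measurable_rnDeriv μ ν
  set S : Set α := {x | r x ≠ 0 ∧ r x ≠ ∞} with hS
  have hSm : MeasurableSet S :=
    ((hrm (measurableSet_singleton 0)).compl).inter ((hrm (measurableSet_singleton ∞)).compl)
  set c : ℝ := (ν S).toReal with hc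
  set h : α → ℝ := fun x => ((r x)⁻¹).toReal with hh
  have hhint : Integrable h μ := aux_integrable_inv_rnDeriv hμν
  have hhval : ∫ x, h x ∂μ = c := aux_integral_inv_rnDeriv hμν
  set φ : α → ℝ := fun x => h x - 1 + llr μ ν x with hφ
  have hφ0 : ∀ᵐ x ∂μ, 0 ≤ φ x := by
    filter_upwards [Measure.rnDeriv_pos hμν, hμν.ae_le (Measure.rnDeriv_lt_top μ ν)]
      with x hpos hlt
    have ht : 0 < (r x).toReal := ENNReal.toReal_pos hpos.ne' hlt.ne
    have key : -Real.log (r x).toReal + 1 ≤ (r x).toReal⁻¹ := by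
      have := Real.add_one_le_exp (-Real.log (r x).toReal)
      rwa [Real.exp_neg, Real.exp_log ht] at this
    simp only [hφ, hh, llr, ENNReal.toReal_inv]
    linarith
  have hφint : Integrable φ μ := (hhint.sub (integrable_const 1)).add hint
  have hφval : ∫ x, φ x ∂μ = c - 1 + ∫ x, llr μ ν x ∂μ := by
    have h1 : Integrable (fun x => h x - 1) μ := hhint.sub (integrable_const 1)
    have e1 : ∫ x, φ x ∂μ = (∫ x, (h x - 1) ∂μ) + ∫ x, llr μ ν x ∂μ := integral_add h1 hint
    rw [e1, integral_sub hhint (integrable_const 1), hhval]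
    simp
  have hc1 : c ≤ 1 := by
    rw [hc]
    calc (ν S).toReal ≤ (ν Set.univ).toReal :=
      ENNReal.toReal_mono (measure_ne_top _ _) (measure_mono (Set.subset_univ _))
    _ = 1 := by simp
  have hφnn : 0 ≤ ∫ x, φ x ∂μ := integral_nonneg_of_ae hφ0
  constructor
  · linarith [hφval ▸ hφnn]
  · intro h0
    have e1 : ∫ x, φ x ∂μ = c - 1 := by rw [hφval, h0, add_zero]
    have hφz : ∫ x, φ x ∂μ = 0 := le_antisymm (by rw [e1]; linarith) hφnn
    have hceq : c = 1 := by rw [e1] at hφz; linarith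
    have hφae : φ =ᵐ[μ] 0 := (integral_eq_zero_iff_of_nonneg_ae hφ0 hφint).mp hφz
    -- r = 1 a.e. μ
    have hr1 : ∀ᵐ x ∂μ, r x = 1 := by
      filter_upwards [hφae, Measure.rnDeriv_pos hμν, hμν.ae_le (Measure.rnDeriv_lt_top μ ν)]
        with x hx hpos hlt
      have ht : 0 < (r x).toReal := ENNReal.toReal_pos hpos.ne' hlt.ne
      have ht1 : (r x).toReal = 1 := by
        by_contra hne
        have hlog : Real.log (r x).toReal ≠ 0 := by
          rw [Ne, Real.log_eq_zero]
          push_neg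
          exact ⟨ht.ne', hne, by linarith⟩
        have := Real.add_one_lt_exp (x := -Real.log (r x).toReal) (by simpa using hlog)
        rw [Real.exp_neg, Real.exp_log ht] at this
        have hx' : (r x).toReal⁻¹ - 1 + Real.log (r x).toReal = 0 := by
          simpa [hφ, hh, llr, ENNReal.toReal_inv] using hx
        linarith
      exact (ENNReal.toReal_eq_one_iff _).mp ht1
    -- ν S = 1, so ν Sᶜ = 0
    have hνS : ν S = 1 := (ENNReal.toReal_eq_one_iff _).mp hceq
    have hνSc : ν Sᶜ = 0 := by
      rw [measure_compl hSm (measure_ne_top _ _), hνS, measure_univ, tsub_self]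
    -- the set where r ≠ 1 but r ∈ (0, ∞) is ν-null
    set B : Set α := {x | r x ≠ 1} ∩ S with hB
    have hBm : MeasurableSet B := ((hrm (measurableSet_singleton 1)).compl).inter hSm
    have hμB : μ B = 0 := by
      have h1 : μ {x | ¬ r x = 1} = 0 := ae_iff.mp hr1
      exact measure_mono_null (fun x hx => hx.1) h1
    have hνB : ν B = 0 := by
      have hwd : ∫⁻ x in B, r x ∂ν = 0 := by
        have : (ν.withDensity r) B = 0 := by
          rw [Measure.withDensity_rnDeriv_eq μ ν hμν]; exact hμB
        rwa [withDensity_apply _ hBm] at this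
      have := (setLIntegral_eq_zero_iff hBm hrm).mp hwd
      rw [measure_eq_zero_iff_ae_notMem]
      filter_upwards [this] with x hx
      intro hxB
      exact hxB.2.1 (hx hxB)
    have hν1 : r =ᵐ[ν] 1 := by
      have hsub : {x | ¬ r x = (1 : α → ℝ≥0∞) x} ⊆ B ∪ Sᶜ := by
        intro x hx
        by_cases hxS : x ∈ S
        · exact Or.inl ⟨by simpa using hx, hxS⟩
        · exact Or.inr hxS
      exact ae_iff.mpr (measure_mono_null hsub (measure_union_null hνB hνSc))
    exact (Measure.rnDeriv_eq_one_iff_eq hμν).mp hν1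

-- extra aux for aux1 section (to be appended there)
lemma aux_integral_neg_llr_le_one {α : Type*} [MeasurableSpace α] {μ ν : Measure α}
    (hμν : μ ≪ ν) [IsProbabilityMeasure μ] [IsProbabilityMeasure ν] :
    ∫ x, max (-(llr μ ν x)) 0 ∂μ ≤ 1 := by
  have h1 := integral_mono_ae (aux_integrable_neg_llr hμν) (aux_integrable_inv_rnDeriv hμν)
    (aux_neg_llr_le hμν)
  have h2 : ∫ x, ((μ.rnDeriv ν x)⁻¹).toReal ∂μ ≤ 1 := by
    rw [aux_integral_inv_rnDeriv hμν]
    calc (ν {x | μ.rnDeriv ν x ≠ 0 ∧ μ.rnDeriv ν x ≠ ∞}).toReal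
        ≤ (ν Set.univ).toReal :=
          ENNReal.toReal_mono (measure_ne_top _ _) (measure_mono (Set.subset_univ _))
      _ = 1 := by simp
  linarith

lemma aux_max_neg_add {a b : ℝ} : max (-(a + b)) 0 ≤ max (-a) 0 + max (-b) 0 := by
  refine max_le ?_ (by positivity)
  have h1 : -a ≤ max (-a) 0 := le_max_left _ _
  have h2 : -b ≤ max (-b) 0 := le_max_left _ _
  linarith

end AuxReal



section AuxProd

variable {A B : Type*} [MeasurableSpace A] [MeasurableSpace B]

lemma aux_prod_withDensity (a : Measure A) (b : Measure B) [SigmaFinite a] [SigmaFinite b]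
    {g : A → ℝ≥0∞} {h : B → ℝ≥0∞} (hg : Measurable g) (hh : Measurable h)
    [SigmaFinite (a.withDensity g)] [SigmaFinite (b.withDensity h)] :
    (a.withDensity g).prod (b.withDensity h)
      = (a.prod b).withDensity (fun p => g p.1 * h p.2) := by
  refine Measure.prod_eq fun s t hs ht => ?_
  rw [withDensity_apply _ (hs.prod ht), ← Measure.prod_restrict,
    lintegral_prod_mul hg.aemeasurable hh.aemeasurable,
    withDensity_apply _ hs, withDensity_apply _ ht]

end AuxProd

section AuxCompProd

variable {Z W : Type*} [MeasurableSpace Z] [MeasurableSpace W]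

lemma aux_compProd_withDensity_s14 (q : Measure Z) [SFinite q]
    (η κ' : Kernel Z W) [IsSFiniteKernel η] [IsSFiniteKernel κ']
    {f0 : Z → ℝ≥0∞} (hf0 : Measurable f0) {f : Z × W → ℝ≥0∞} (hf : Measurable f)
    (hκ' : ∀ z, κ' z = (η z).withDensity (fun b => f (z, b))) :
    (q.withDensity f0) ⊗ₘ κ' = (q ⊗ₘ η).withDensity (fun p => f0 p.1 * f p) := by
  have hfz : ∀ z : Z, Measurable (fun b => f (z, b)) := fun z => hf.comp measurable_prodMk_left
  ext s hs
  have hm : Measurable (s.indicator fun p : Z × W => f0 p.1 * f p) :=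
    Measurable.indicator (by fun_prop) hs
  rw [Measure.compProd_apply hs,
    lintegral_withDensity_eq_lintegral_mul q hf0 (Kernel.measurable_kernel_prodMk_left hs),
    withDensity_apply _ hs, ← lintegral_indicator hs,
    Measure.lintegral_compProd hm]
  refine lintegral_congr fun z => ?_
  have hpre : MeasurableSet (Prod.mk z ⁻¹' s) := measurable_prodMk_left hs
  have hind : ∀ b : W, s.indicator (fun p : Z × W => f0 p.1 * f p) (z, b)
      = (Prod.mk z ⁻¹' s).indicator (fun b => f0 z * f (z, b)) b := by
    intro b
    rw [← Set.indicator_comp_right (Prod.mk z) (g := fun p : Z × W => f0 p.1 * f p)]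
    rfl
  simp only [Pi.mul_apply, hind]
  rw [lintegral_indicator hpre, hκ' z, withDensity_apply _ hpre,
    lintegral_const_mul (f0 z) (hfz z)]

variable {X Y : Type*} [MeasurableSpace X] [MeasurableSpace Y]

lemma aux_map_compProd_left (m : Measure Z) [SFinite m]
    (κ₁ : Kernel Z X) (κ₂ : Kernel Z Y) [IsMarkovKernel κ₁] [IsMarkovKernel κ₂] :
    (m ⊗ₘ (κ₁ ×ₖ κ₂)).map (fun w : Z × X × Y => (w.1, w.2.1)) = m ⊗ₘ κ₁ := by
  have hm : Measurable (fun w : Z × X × Y => (w.1, w.2.1)) :=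
    measurable_fst.prodMk (measurable_fst.comp measurable_snd)
  ext s hs
  rw [Measure.map_apply hm hs, Measure.compProd_apply (hm hs), Measure.compProd_apply hs]
  refine lintegral_congr fun z => ?_
  have : Prod.mk z ⁻¹' ((fun w : Z × X × Y => (w.1, w.2.1)) ⁻¹' s)
      = (Prod.mk z ⁻¹' s) ×ˢ (Set.univ : Set Y) := by
    ext p; simp [Set.mem_prod]
  rw [this, Kernel.prod_apply, Measure.prod_prod, measure_univ, mul_one]

lemma aux_map_compProd_right (m : Measure Z) [SFinite m]
    (κ₁ : Kernel Z X) (κ₂ : Kernel Z Y) [IsMarkovKernel κ₁] [IsMarkovKernel κ₂] :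
    (m ⊗ₘ (κ₁ ×ₖ κ₂)).map (fun w : Z × X × Y => (w.1, w.2.2)) = m ⊗ₘ κ₂ := by
  have hm : Measurable (fun w : Z × X × Y => (w.1, w.2.2)) :=
    measurable_fst.prodMk (measurable_snd.comp measurable_snd)
  ext s hs
  rw [Measure.map_apply hm hs, Measure.compProd_apply (hm hs), Measure.compProd_apply hs]
  refine lintegral_congr fun z => ?_
  have : Prod.mk z ⁻¹' ((fun w : Z × X × Y => (w.1, w.2.2)) ⁻¹' s)
      = (Set.univ : Set X) ×ˢ (Prod.mk z ⁻¹' s) := by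
    ext p; simp [Set.mem_prod]
  rw [this, Kernel.prod_apply, Measure.prod_prod, measure_univ, one_mul]

lemma aux_map_compProd_fst (m : Measure Z) [SFinite m]
    (κ : Kernel Z W) [IsMarkovKernel κ] :
    (m ⊗ₘ κ).map Prod.fst = m :=
  Measure.fst_compProd m κ

lemma aux_ae_absolutelyContinuous [MeasurableSpace.CountablyGenerated X]
    (μ q : Measure Z) [SFinite μ] [SFinite q] (ρ κ : Kernel Z X)
    [IsFiniteKernel ρ] [IsFiniteKernel κ]
    (hcp : μ ⊗ₘ ρ ≪ q ⊗ₘ κ) : ∀ᵐ z ∂μ, ρ z ≪ κ z := by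
  have hM : MeasurableSet (Kernel.mutuallySingularSet ρ κ) :=
    Kernel.measurableSet_mutuallySingularSet ρ κ
  have hslice : ∀ z, Prod.mk z ⁻¹' (Kernel.mutuallySingularSet ρ κ)
      = Kernel.mutuallySingularSetSlice ρ κ z := fun z => rfl
  have hQ : (q ⊗ₘ κ) (Kernel.mutuallySingularSet ρ κ) = 0 := by
    rw [Measure.compProd_apply hM]
    refine lintegral_eq_zero_iff (Kernel.measurable_kernel_prodMk_left hM) |>.mpr ?_
    refine ae_of_all _ fun z => ?_
    show (κ z) (Prod.mk z ⁻¹' Kernel.mutuallySingularSet ρ κ) = 0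
    rw [hslice z]
    exact Kernel.measure_mutuallySingularSetSlice ρ κ z
  have hP : (μ ⊗ₘ ρ) (Kernel.mutuallySingularSet ρ κ) = 0 := hcp hQ
  rw [Measure.compProd_apply hM,
    lintegral_eq_zero_iff (Kernel.measurable_kernel_prodMk_left hM)] at hP
  filter_upwards [hP] with z hz
  have hz' : (ρ z) (Kernel.mutuallySingularSetSlice ρ κ z) = 0 := hz
  exact (Kernel.singularPart_eq_zero_iff_absolutelyContinuous ρ κ z).mp
    ((Kernel.singularPart_eq_zero_iff_measure_eq_zero ρ κ z).mpr hz')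

end AuxCompProd

section Core

variable {Z X Y : Type*} [MeasurableSpace Z] [MeasurableSpace X] [MeasurableSpace Y]
  [MeasurableSpace.CountablyGenerated X] [MeasurableSpace.CountablyGenerated Y]

theorem aux_core
    (q : Measure Z) [IsProbabilityMeasure q]
    (κX : Kernel Z X) (κY : Kernel Z Y) [IsMarkovKernel κX] [IsMarkovKernel κY]
    (μ : Measure Z) [IsProbabilityMeasure μ]
    (ρX : Kernel Z X) (ρY : Kernel Z Y) [IsMarkovKernel ρX] [IsMarkovKernel ρY]
    (P : Measure (Z × X × Y)) [IsProbabilityMeasure P]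
    (h1 : P.map Prod.fst = μ)
    (hmX : P.map (fun w => (w.1, w.2.1)) = μ ⊗ₘ ρX)
    (hmY : P.map (fun w => (w.1, w.2.2)) = μ ⊗ₘ ρY) :
    KL (μ ⊗ₘ (ρX ×ₖ ρY)) (q ⊗ₘ (κX ×ₖ κY)) ≤ KL P (q ⊗ₘ (κX ×ₖ κY)) ∧
      (KL (μ ⊗ₘ (ρX ×ₖ ρY)) (q ⊗ₘ (κX ×ₖ κY)) ≠ ∞ →
        KL P (q ⊗ₘ (κX ×ₖ κY)) = KL (μ ⊗ₘ (ρX ×ₖ ρY)) (q ⊗ₘ (κX ×ₖ κY)) →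
        P = μ ⊗ₘ (ρX ×ₖ ρY)) := by
  set Qm : Measure (Z × X × Y) := q ⊗ₘ (κX ×ₖ κY) with hQm_def
  set Pstar : Measure (Z × X × Y) := μ ⊗ₘ (ρX ×ₖ ρY) with hPstar_def
  haveI : IsProbabilityMeasure Qm := by rw [hQm_def]; infer_instance
  haveI : IsProbabilityMeasure Pstar := by rw [hPstar_def]; infer_instance
  by_cases hc : P ≪ Qm ∧ Integrable (llr P Qm) P
  case neg =>
    have htop : KL P Qm = ∞ := by rw [KL, if_neg hc]
    constructor
    · rw [htop]; exact le_top
    · intro hfin heq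
      exact absurd (heq ▸ htop) hfin
  case pos =>
  obtain ⟨hPQ, hPint⟩ := hc
  have hpiX : Measurable (fun w : Z × X × Y => (w.1, w.2.1)) :=
    measurable_fst.prodMk (measurable_fst.comp measurable_snd)
  have hpiY : Measurable (fun w : Z × X × Y => (w.1, w.2.2)) :=
    measurable_fst.prodMk (measurable_snd.comp measurable_snd)
  -- marginal absolute continuity
  have hμq : μ ≪ q := by
    have h := hPQ.map (measurable_fst : Measurable (Prod.fst : Z × X × Y → Z))
    rwa [h1, hQm_def, aux_map_compProd_fst q (κX ×ₖ κY)] at h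
  have hmXQ : Qm.map (fun w : Z × X × Y => (w.1, w.2.1)) = q ⊗ₘ κX := by
    rw [hQm_def]; exact aux_map_compProd_left q κX κY
  have hmYQ : Qm.map (fun w : Z × X × Y => (w.1, w.2.2)) = q ⊗ₘ κY := by
    rw [hQm_def]; exact aux_map_compProd_right q κX κY
  have hXac : μ ⊗ₘ ρX ≪ q ⊗ₘ κX := by
    have h := hPQ.map hpiX
    rwa [hmX, hmXQ] at h
  have hYac : μ ⊗ₘ ρY ≪ q ⊗ₘ κY := by
    have h := hPQ.map hpiY
    rwa [hmY, hmYQ] at h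
  have haeX : ∀ᵐ z ∂μ, ρX z ≪ κX z := aux_ae_absolutelyContinuous μ q ρX κX hXac
  have haeY : ∀ᵐ z ∂μ, ρY z ≪ κY z := aux_ae_absolutelyContinuous μ q ρY κY hYac
  -- modified kernels, absolutely continuous everywhere
  have hDX : MeasurableSet {z | ρX z ≪ κX z} := Kernel.measurableSet_absolutelyContinuous ρX κX
  have hDY : MeasurableSet {z | ρY z ≪ κY z} := Kernel.measurableSet_absolutelyContinuous ρY κY
  set ρtX : Kernel Z X := Kernel.piecewise hDX ρX κX with hρtX_def
  set ρtY : Kernel Z Y := Kernel.piecewise hDY ρY κY with hρtY_def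
  haveI : IsMarkovKernel ρtX := by rw [hρtX_def]; infer_instance
  haveI : IsMarkovKernel ρtY := by rw [hρtY_def]; infer_instance
  have hρtX_ac : ∀ z, ρtX z ≪ κX z := by
    intro z
    rw [hρtX_def, Kernel.piecewise_apply]
    split_ifs with h
    · exact h
    · exact Measure.AbsolutelyContinuous.rfl
  have hρtY_ac : ∀ z, ρtY z ≪ κY z := by
    intro z
    rw [hρtY_def, Kernel.piecewise_apply]
    split_ifs with h
    · exact h
    · exact Measure.AbsolutelyContinuous.rfl
  have hρtX_ae : ∀ᵐ z ∂μ, ρtX z = ρX z := by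
    filter_upwards [haeX] with z hz
    rw [hρtX_def, Kernel.piecewise_apply]
    split_ifs with h
    · rfl
    · exact absurd hz h
  have hρtY_ae : ∀ᵐ z ∂μ, ρtY z = ρY z := by
    filter_upwards [haeY] with z hz
    rw [hρtY_def, Kernel.piecewise_apply]
    split_ifs with h
    · rfl
    · exact absurd hz h
  have hcongrX : μ ⊗ₘ ρX = μ ⊗ₘ ρtX :=
    Measure.compProd_congr (by filter_upwards [hρtX_ae] with z hz; exact hz.symm)
  have hcongrY : μ ⊗ₘ ρY = μ ⊗ₘ ρtY :=
    Measure.compProd_congr (by filter_upwards [hρtY_ae] with z hz; exact hz.symm)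
  have hcongrProd : Pstar = μ ⊗ₘ (ρtX ×ₖ ρtY) := by
    rw [hPstar_def]
    refine Measure.compProd_congr ?_
    filter_upwards [hρtX_ae, hρtY_ae] with z hz1 hz2
    rw [Kernel.prod_apply, Kernel.prod_apply, hz1, hz2]
  -- densities
  set f0 : Z → ℝ≥0∞ := μ.rnDeriv q with hf0def
  set f1 : Z → X → ℝ≥0∞ := Kernel.rnDeriv ρtX κX with hf1def
  set f2 : Z → Y → ℝ≥0∞ := Kernel.rnDeriv ρtY κY with hf2def
  have hf0m : Measurable f0 := Measure.measurable_rnDeriv μ q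
  have hf1m : Measurable (fun p : Z × X => f1 p.1 p.2) := Kernel.measurable_rnDeriv ρtX κX
  have hf2m : Measurable (fun p : Z × Y => f2 p.1 p.2) := Kernel.measurable_rnDeriv ρtY κY
  have hq0 : q.withDensity f0 = μ := Measure.withDensity_rnDeriv_eq μ q hμq
  have hWX : ∀ z, ρtX z = (κX z).withDensity (f1 z) := by
    intro z
    have h := Kernel.withDensity_rnDeriv_eq (hρtX_ac z)
    rw [Kernel.withDensity_apply κX (Kernel.measurable_rnDeriv ρtX κX)] at h
    exact h.symm
  have hWY : ∀ z, ρtY z = (κY z).withDensity (f2 z) := by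
    intro z
    have h := Kernel.withDensity_rnDeriv_eq (hρtY_ac z)
    rw [Kernel.withDensity_apply κY (Kernel.measurable_rnDeriv ρtY κY)] at h
    exact h.symm
  have hWprod : ∀ z, (ρtX ×ₖ ρtY) z
      = ((κX ×ₖ κY) z).withDensity (fun p : X × Y => f1 z p.1 * f2 z p.2) := by
    intro z
    haveI : SigmaFinite ((κX z).withDensity (f1 z)) := by rw [← hWX z]; infer_instance
    haveI : SigmaFinite ((κY z).withDensity (f2 z)) := by rw [← hWY z]; infer_instance
    rw [Kernel.prod_apply, Kernel.prod_apply, hWX z, hWY z]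
    exact aux_prod_withDensity (κX z) (κY z) (g := f1 z) (h := f2 z)
      (hf1m.comp measurable_prodMk_left) (hf2m.comp measurable_prodMk_left)
  set G : Z × X × Y → ℝ≥0∞ := fun w => f0 w.1 * (f1 w.1 w.2.1 * f2 w.1 w.2.2) with hGdef
  have hGm : Measurable G :=
    (hf0m.comp measurable_fst).mul ((hf1m.comp hpiX).mul (hf2m.comp hpiY))
  have hPstar_eq : Pstar = Qm.withDensity G := by
    rw [hcongrProd, ← hq0, hQm_def]
    exact aux_compProd_withDensity_s14 q (κX ×ₖ κY) (ρtX ×ₖ ρtY) hf0m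
      (f := fun p : Z × (X × Y) => f1 p.1 p.2.1 * f2 p.1 p.2.2)
      ((hf1m.comp hpiX).mul (hf2m.comp hpiY)) hWprod
  have hPsQ : Pstar ≪ Qm := by
    rw [hPstar_eq]; exact withDensity_absolutelyContinuous _ _
  have hrnPs : Pstar.rnDeriv Qm =ᵐ[Qm] G := by
    rw [hPstar_eq]; exact Measure.rnDeriv_withDensity Qm hGm
  -- marginals of Pstar
  have hPsm1 : Pstar.map Prod.fst = μ := by
    rw [hPstar_def]; exact aux_map_compProd_fst μ (ρX ×ₖ ρY)
  have hPsmX : Pstar.map (fun w : Z × X × Y => (w.1, w.2.1)) = μ ⊗ₘ ρX := by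
    rw [hPstar_def]; exact aux_map_compProd_left μ ρX ρY
  have hPsmY : Pstar.map (fun w : Z × X × Y => (w.1, w.2.2)) = μ ⊗ₘ ρY := by
    rw [hPstar_def]; exact aux_map_compProd_right μ ρX ρY
  -- null sets
  have hT0 : μ {z | f0 z = 0} = 0 := by
    have h := Measure.rnDeriv_pos hμq
    rw [ae_iff] at h
    refine measure_mono_null ?_ h
    intro z hz
    simp only [Set.mem_setOf_eq] at hz ⊢
    intro hlt
    have hz' : (∂μ/∂q) z = 0 := hz
    rw [hz'] at hlt
    exact lt_irrefl _ hlt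
  have hT1 : (μ ⊗ₘ ρX) {p : Z × X | f1 p.1 p.2 = 0} = 0 := by
    have hT1m : MeasurableSet {p : Z × X | f1 p.1 p.2 = 0} := hf1m (measurableSet_singleton 0)
    rw [hcongrX, Measure.compProd_apply hT1m]
    refine (lintegral_eq_zero_iff (Kernel.measurable_kernel_prodMk_left hT1m)).mpr
      (ae_of_all _ fun z => ?_)
    show (ρtX z) (Prod.mk z ⁻¹' {p : Z × X | f1 p.1 p.2 = 0}) = 0
    have hpos := Kernel.rnDeriv_pos (hρtX_ac z)
    rw [ae_iff] at hpos
    refine measure_mono_null ?_ hpos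
    intro x hx
    simp only [Set.mem_preimage, Set.mem_setOf_eq] at hx ⊢
    intro hlt
    have hx' : ρtX.rnDeriv κX z x = 0 := hx
    rw [hx'] at hlt
    exact lt_irrefl _ hlt
  have hT2 : (μ ⊗ₘ ρY) {p : Z × Y | f2 p.1 p.2 = 0} = 0 := by
    have hT2m : MeasurableSet {p : Z × Y | f2 p.1 p.2 = 0} := hf2m (measurableSet_singleton 0)
    rw [hcongrY, Measure.compProd_apply hT2m]
    refine (lintegral_eq_zero_iff (Kernel.measurable_kernel_prodMk_left hT2m)).mpr
      (ae_of_all _ fun z => ?_)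
    show (ρtY z) (Prod.mk z ⁻¹' {p : Z × Y | f2 p.1 p.2 = 0}) = 0
    have hpos := Kernel.rnDeriv_pos (hρtY_ac z)
    rw [ae_iff] at hpos
    refine measure_mono_null ?_ hpos
    intro y hy
    simp only [Set.mem_preimage, Set.mem_setOf_eq] at hy ⊢
    intro hlt
    have hy' : ρtY.rnDeriv κY z y = 0 := hy
    rw [hy'] at hlt
    exact lt_irrefl _ hlt
  have hT0m : MeasurableSet {z : Z | f0 z = 0} := hf0m (measurableSet_singleton 0)
  have hT1m : MeasurableSet {p : Z × X | f1 p.1 p.2 = 0} := hf1m (measurableSet_singleton 0)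
  have hT2m : MeasurableSet {p : Z × Y | f2 p.1 p.2 = 0} := hf2m (measurableSet_singleton 0)
  have hnull : ∀ (ν : Measure (Z × X × Y)), ν.map Prod.fst = μ →
      ν.map (fun w : Z × X × Y => (w.1, w.2.1)) = μ ⊗ₘ ρX →
      ν.map (fun w : Z × X × Y => (w.1, w.2.2)) = μ ⊗ₘ ρY →
      ν ({w : Z × X × Y | f0 w.1 = 0} ∪ {w | f1 w.1 w.2.1 = 0} ∪ {w | f2 w.1 w.2.2 = 0})
        = 0 := by
    intro ν hν1 hνX hνY
    have e0 : ν {w : Z × X × Y | f0 w.1 = 0} = 0 := by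
      have : ν (Prod.fst ⁻¹' {z | f0 z = 0}) = μ {z | f0 z = 0} := by
        rw [← hν1, Measure.map_apply measurable_fst hT0m]
      rw [show {w : Z × X × Y | f0 w.1 = 0} = Prod.fst ⁻¹' {z | f0 z = 0} from rfl, this, hT0]
    have e1 : ν {w : Z × X × Y | f1 w.1 w.2.1 = 0} = 0 := by
      have : ν ((fun w : Z × X × Y => (w.1, w.2.1)) ⁻¹' {p : Z × X | f1 p.1 p.2 = 0})
          = (μ ⊗ₘ ρX) {p : Z × X | f1 p.1 p.2 = 0} := by
        rw [← hνX, Measure.map_apply hpiX hT1m]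
      rw [show {w : Z × X × Y | f1 w.1 w.2.1 = 0}
        = (fun w : Z × X × Y => (w.1, w.2.1)) ⁻¹' {p : Z × X | f1 p.1 p.2 = 0} from rfl,
        this, hT1]
    have e2 : ν {w : Z × X × Y | f2 w.1 w.2.2 = 0} = 0 := by
      have : ν ((fun w : Z × X × Y => (w.1, w.2.2)) ⁻¹' {p : Z × Y | f2 p.1 p.2 = 0})
          = (μ ⊗ₘ ρY) {p : Z × Y | f2 p.1 p.2 = 0} := by
        rw [← hνY, Measure.map_apply hpiY hT2m]
      rw [show {w : Z × X × Y | f2 w.1 w.2.2 = 0}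
        = (fun w : Z × X × Y => (w.1, w.2.2)) ⁻¹' {p : Z × Y | f2 p.1 p.2 = 0} from rfl,
        this, hT2]
    exact measure_union_null (measure_union_null e0 e1) e2
  have hnullP := hnull P h1 hmX hmY
  have hnullPs := hnull Pstar hPsm1 hPsmX hPsmY
  -- P ≪ Pstar
  have hPPs : P ≪ Pstar := by
    refine Measure.AbsolutelyContinuous.mk fun s hs h0 => ?_
    rw [hPstar_eq, withDensity_apply _ hs] at h0
    have hzero := (setLIntegral_eq_zero_iff hs hGm).mp h0
    set U : Set (Z × X × Y) :=
      {w : Z × X × Y | f0 w.1 = 0} ∪ {w | f1 w.1 w.2.1 = 0} ∪ {w | f2 w.1 w.2.2 = 0} with hU_def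
    have hQs : Qm (s \ U) = 0 := by
      rw [measure_eq_zero_iff_ae_notMem]
      filter_upwards [hzero] with w hw
      rintro ⟨hws, hwn⟩
      apply hwn
      have hG0 : G w = 0 := hw hws
      rw [hGdef] at hG0
      rcases mul_eq_zero.mp hG0 with h | h
      · exact Or.inl (Or.inl h)
      · rcases mul_eq_zero.mp h with h' | h'
        · exact Or.inl (Or.inr h')
        · exact Or.inr h'
    have hle : P s ≤ P U + P (s \ U) := by
      refine le_trans (measure_mono fun w hw => ?_) (measure_union_le _ _)
      by_cases h : w ∈ U
      · exact Or.inl h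
      · exact Or.inr ⟨hw, h⟩
    rw [hnullP, hPQ hQs, add_zero] at hle
    exact le_antisymm hle zero_le
  -- a.e. finiteness and positivity
  have hfinQ : ∀ᵐ w ∂Qm, f0 w.1 < ∞ ∧ f1 w.1 w.2.1 < ∞ ∧ f2 w.1 w.2.2 < ∞ := by
    have h0 : ∀ᵐ w ∂Qm, f0 w.1 < ∞ := by
      refine ae_of_ae_map (f := (Prod.fst : Z × X × Y → Z)) (p := fun z => f0 z < ∞)
        measurable_fst.aemeasurable ?_
      rw [hQm_def, aux_map_compProd_fst q (κX ×ₖ κY)]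
      exact Measure.rnDeriv_lt_top μ q
    have hx : ∀ᵐ w ∂Qm, f1 w.1 w.2.1 < ∞ := by
      refine ae_of_ae_map (f := fun w : Z × X × Y => (w.1, w.2.1))
        (p := fun p : Z × X => f1 p.1 p.2 < ∞) hpiX.aemeasurable ?_
      rw [hmXQ]
      exact Measure.ae_compProd_of_ae_ae (measurableSet_lt hf1m measurable_const)
        (ae_of_all _ fun z => Kernel.rnDeriv_lt_top ρtX κX)
    have hy : ∀ᵐ w ∂Qm, f2 w.1 w.2.2 < ∞ := by
      refine ae_of_ae_map (f := fun w : Z × X × Y => (w.1, w.2.2))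
        (p := fun p : Z × Y => f2 p.1 p.2 < ∞) hpiY.aemeasurable ?_
      rw [hmYQ]
      exact Measure.ae_compProd_of_ae_ae (measurableSet_lt hf2m measurable_const)
        (ae_of_all _ fun z => Kernel.rnDeriv_lt_top ρtY κY)
    filter_upwards [h0, hx, hy] with w a b c
    exact ⟨a, b, c⟩
  have hfinP : ∀ᵐ w ∂P, f0 w.1 < ∞ ∧ f1 w.1 w.2.1 < ∞ ∧ f2 w.1 w.2.2 < ∞ :=
    hfinQ.filter_mono hPQ.ae_le
  have hfinPs : ∀ᵐ w ∂Pstar, f0 w.1 < ∞ ∧ f1 w.1 w.2.1 < ∞ ∧ f2 w.1 w.2.2 < ∞ :=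
    hfinQ.filter_mono hPsQ.ae_le
  have hposOf : ∀ (ν : Measure (Z × X × Y)),
      ν ({w : Z × X × Y | f0 w.1 = 0} ∪ {w | f1 w.1 w.2.1 = 0} ∪ {w | f2 w.1 w.2.2 = 0}) = 0 →
      ∀ᵐ w ∂ν, f0 w.1 ≠ 0 ∧ f1 w.1 w.2.1 ≠ 0 ∧ f2 w.1 w.2.2 ≠ 0 := by
    intro ν hν
    rw [ae_iff]
    refine measure_mono_null ?_ hν
    intro w hw
    simp only [Set.mem_setOf_eq, not_and_or, not_not] at hw
    rcases hw with h | h | h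
    · exact Or.inl (Or.inl h)
    · exact Or.inl (Or.inr h)
    · exact Or.inr h
  have hposP := hposOf P hnullP
  have hposPs := hposOf Pstar hnullPs
  -- the split functions
  set Afun : Z × X → ℝ := llr (μ ⊗ₘ ρX) (q ⊗ₘ κX) with hAdef
  set Bfun : Z × Y → ℝ := fun p => Real.log (f2 p.1 p.2).toReal with hBdef
  have hAm : Measurable Afun := measurable_llr _ _
  have hBm : Measurable Bfun := Real.measurable_log.comp hf2m.ennreal_toReal
  have hXwd : μ ⊗ₘ ρX = (q ⊗ₘ κX).withDensity (fun p : Z × X => f0 p.1 * f1 p.1 p.2) := by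
    rw [hcongrX, ← hq0]
    exact aux_compProd_withDensity_s14 q κX ρtX hf0m hf1m hWX
  have hArn : (μ ⊗ₘ ρX).rnDeriv (q ⊗ₘ κX) =ᵐ[q ⊗ₘ κX] fun p : Z × X => f0 p.1 * f1 p.1 p.2 := by
    rw [hXwd]
    exact Measure.rnDeriv_withDensity _ ((hf0m.comp measurable_fst).mul hf1m)
  have hAcomp : ∀ (ν : Measure (Z × X × Y)),
      ν.map (fun w : Z × X × Y => (w.1, w.2.1)) = μ ⊗ₘ ρX →
      (fun w : Z × X × Y => Afun (w.1, w.2.1))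
        =ᵐ[ν] fun w => Real.log (f0 w.1 * f1 w.1 w.2.1).toReal := by
    intro ν hνm
    have h2 : ∀ᵐ p ∂(μ ⊗ₘ ρX), Afun p = Real.log (f0 p.1 * f1 p.1 p.2).toReal := by
      filter_upwards [hXac.ae_le hArn] with p hp
      simp only [hAdef, llr, hp]
    rw [← hνm] at h2
    exact ae_of_ae_map hpiX.aemeasurable h2
  have hsplit : ∀ (ν : Measure (Z × X × Y)), ν ≪ Qm →
      ν.map (fun w : Z × X × Y => (w.1, w.2.1)) = μ ⊗ₘ ρX →
      (∀ᵐ w ∂ν, f0 w.1 ≠ 0 ∧ f1 w.1 w.2.1 ≠ 0 ∧ f2 w.1 w.2.2 ≠ 0) →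
      (∀ᵐ w ∂ν, f0 w.1 < ∞ ∧ f1 w.1 w.2.1 < ∞ ∧ f2 w.1 w.2.2 < ∞) →
      llr Pstar Qm =ᵐ[ν] fun w => Afun (w.1, w.2.1) + Bfun (w.1, w.2.2) := by
    intro ν hν hνm hpos hfin
    have hllrG : llr Pstar Qm =ᵐ[ν] fun w => Real.log (G w).toReal := by
      filter_upwards [hν.ae_le hrnPs] with w hw
      simp only [llr, hw]
    filter_upwards [hllrG, hAcomp ν hνm, hpos, hfin] with w hw hA hp hf
    have h01 : f0 w.1 * f1 w.1 w.2.1 ≠ 0 := mul_ne_zero hp.1 hp.2.1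
    have h01' : f0 w.1 * f1 w.1 w.2.1 ≠ ∞ := ENNReal.mul_ne_top hf.1.ne hf.2.1.ne
    have e1 : (G w).toReal
        = (f0 w.1 * f1 w.1 w.2.1).toReal * (f2 w.1 w.2.2).toReal := by
      show (f0 w.1 * (f1 w.1 w.2.1 * f2 w.1 w.2.2)).toReal = _
      rw [← mul_assoc, ENNReal.toReal_mul]
    rw [hw, e1, Real.log_mul (by
        rw [ENNReal.toReal_ne_zero]; exact ⟨h01, h01'⟩) (by
        rw [ENNReal.toReal_ne_zero]; exact ⟨hp.2.2, hf.2.2.ne⟩), ← hA]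
  have hsplitP := hsplit P hPQ hmX hposP hfinP
  have hsplitPs := hsplit Pstar hPsQ hPsmX hposPs hfinPs
  -- the chain rule
  have hchain : llr P Qm =ᵐ[P] fun w => llr P Pstar w + llr Pstar Qm w := by
    have hmul := (Measure.rnDeriv_mul_rnDeriv hPPs (κ := Qm)).filter_mono hPQ.ae_le
    have hp1 : ∀ᵐ w ∂P, 0 < P.rnDeriv Pstar w := Measure.rnDeriv_pos hPPs
    have hp2 : ∀ᵐ w ∂P, P.rnDeriv Pstar w < ∞ :=
      (Measure.rnDeriv_lt_top P Pstar).filter_mono hPPs.ae_le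
    have hp3 : ∀ᵐ w ∂P, Pstar.rnDeriv Qm w = G w := hrnPs.filter_mono hPQ.ae_le
    filter_upwards [hmul, hp1, hp2, hp3, hposP, hfinP] with w h1' h2 h3 h4 h5 h6
    have hGpos : G w ≠ 0 := mul_ne_zero h5.1 (mul_ne_zero h5.2.1 h5.2.2)
    have hGfin : G w ≠ ∞ := ENNReal.mul_ne_top h6.1.ne (ENNReal.mul_ne_top h6.2.1.ne h6.2.2.ne)
    simp only [llr]
    rw [← h1', Pi.mul_apply, ENNReal.toReal_mul,
      Real.log_mul (by rw [ENNReal.toReal_ne_zero]; exact ⟨h2.ne', h3.ne⟩) (by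
        rw [ENNReal.toReal_ne_zero, h4]; exact ⟨hGpos, hGfin⟩)]
  -- integrability of the negative parts
  have hnegPPs : Integrable (fun w => max (-(llr P Pstar w)) 0) P := aux_integrable_neg_llr hPPs
  have hnegA : Integrable (fun p => max (-(Afun p)) 0) (μ ⊗ₘ ρX) := aux_integrable_neg_llr hXac
  have hmapIntX : ∀ (ν : Measure (Z × X × Y)),
      ν.map (fun w : Z × X × Y => (w.1, w.2.1)) = μ ⊗ₘ ρX → ∀ (g : Z × X → ℝ), Measurable g →
      (Integrable g (μ ⊗ₘ ρX) ↔ Integrable (fun w : Z × X × Y => g (w.1, w.2.1)) ν) := by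
    intro ν hνm g hg
    rw [← hνm]
    exact integrable_map_measure hg.aestronglyMeasurable hpiX.aemeasurable
  have hmapIntY : ∀ (ν : Measure (Z × X × Y)),
      ν.map (fun w : Z × X × Y => (w.1, w.2.2)) = μ ⊗ₘ ρY → ∀ (g : Z × Y → ℝ), Measurable g →
      (Integrable g (μ ⊗ₘ ρY) ↔ Integrable (fun w : Z × X × Y => g (w.1, w.2.2)) ν) := by
    intro ν hνm g hg
    rw [← hνm]
    exact integrable_map_measure hg.aestronglyMeasurable hpiY.aemeasurable
  have hInegA_P : Integrable (fun w : Z × X × Y => max (-(Afun (w.1, w.2.1))) 0) P :=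
    (hmapIntX P hmX _ (hAm.neg.max measurable_const)).mp hnegA
  have hnegB : Integrable (fun p => max (-(Bfun p)) 0) (μ ⊗ₘ ρY) := by
    rw [hcongrY]
    have hmeas : AEStronglyMeasurable (fun p : Z × Y => max (-(Bfun p)) 0) (μ ⊗ₘ ρtY) :=
      (hBm.neg.max measurable_const).aestronglyMeasurable
    rw [Measure.integrable_compProd_iff hmeas]
    have hBeq : ∀ z, (fun y => Bfun (z, y)) =ᵐ[ρtY z] llr (ρtY z) (κY z) := by
      intro z
      have h := Kernel.rnDeriv_eq_rnDeriv_measure (κ := ρtY) (η := κY) (a := z)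
      filter_upwards [(hρtY_ac z).ae_le h] with y hy
      simp only [hBdef, llr, hf2def]
      rw [hy]
    have hBint : ∀ z, Integrable (fun y => max (-(Bfun (z, y))) 0) (ρtY z) := by
      intro z
      refine (aux_integrable_neg_llr (hρtY_ac z)).congr ?_
      filter_upwards [hBeq z] with y hy
      rw [hy]
    constructor
    · exact ae_of_all _ hBint
    · refine Integrable.mono' (integrable_const 1) ?_ (ae_of_all _ fun z => ?_)
      · have hsm : StronglyMeasurable fun p : Z × Y => ‖max (-(Bfun p)) 0‖ :=
          ((hBm.neg.max measurable_const).norm).stronglyMeasurable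
        exact hsm.integral_kernel_prod_right'.aestronglyMeasurable
      · have hval : ∫ y, ‖max (-(Bfun (z, y))) 0‖ ∂ρtY z
            = ∫ y, max (-(llr (ρtY z) (κY z) y)) 0 ∂ρtY z := by
          refine integral_congr_ae ?_
          filter_upwards [hBeq z] with y hy
          rw [Real.norm_eq_abs, abs_of_nonneg (le_max_right _ _), hy]
        rw [Real.norm_eq_abs, abs_of_nonneg (integral_nonneg fun y => norm_nonneg _), hval]
        exact aux_integral_neg_llr_le_one (hρtY_ac z)
  have hInegB_P : Integrable (fun w : Z × X × Y => max (-(Bfun (w.1, w.2.2))) 0) P :=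
    (hmapIntY P hmY _ (hBm.neg.max measurable_const)).mp hnegB
  have hnegSplit : Integrable (fun w => max (-(llr Pstar Qm w)) 0) P := by
    refine Integrable.mono' (hInegA_P.add hInegB_P)
      ((measurable_llr _ _).neg.max measurable_const).aestronglyMeasurable ?_
    filter_upwards [hsplitP] with w hw
    rw [Real.norm_eq_abs, abs_of_nonneg (le_max_right _ _), hw]
    exact aux_max_neg_add
  have hIntPPs : Integrable (llr P Pstar) P :=
    aux_integrable_of_sum (measurable_llr _ _).aestronglyMeasurable
      (hPint.congr hchain) hnegPPs hnegSplit
  have hIntPsQ_P : Integrable (llr Pstar Qm) P := by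
    refine ((hPint.congr hchain).sub hIntPPs).congr (ae_of_all _ fun w => ?_)
    simp only [Pi.sub_apply]
    ring
  have hIntSplit_P : Integrable (fun w : Z × X × Y => Afun (w.1, w.2.1) + Bfun (w.1, w.2.2)) P :=
    hIntPsQ_P.congr hsplitP
  have hIntA'_P : Integrable (fun w : Z × X × Y => Afun (w.1, w.2.1)) P :=
    aux_integrable_of_sum ((hAm.comp hpiX).aestronglyMeasurable) hIntSplit_P hInegA_P hInegB_P
  have hIntB'_P : Integrable (fun w : Z × X × Y => Bfun (w.1, w.2.2)) P := by
    refine (hIntSplit_P.sub hIntA'_P).congr (ae_of_all _ fun w => ?_)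
    simp only [Pi.sub_apply]
    ring
  -- transfer integrability and integrals to Pstar
  have hIntA : Integrable Afun (μ ⊗ₘ ρX) := (hmapIntX P hmX _ hAm).mpr hIntA'_P
  have hIntB : Integrable Bfun (μ ⊗ₘ ρY) := (hmapIntY P hmY _ hBm).mpr hIntB'_P
  have hIntA_Ps : Integrable (fun w : Z × X × Y => Afun (w.1, w.2.1)) Pstar :=
    (hmapIntX Pstar hPsmX _ hAm).mp hIntA
  have hIntB_Ps : Integrable (fun w : Z × X × Y => Bfun (w.1, w.2.2)) Pstar :=
    (hmapIntY Pstar hPsmY _ hBm).mp hIntB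
  have hIntPsQ_Ps : Integrable (llr Pstar Qm) Pstar :=
    (hIntA_Ps.add hIntB_Ps).congr hsplitPs.symm
  have hintvalA : ∀ (ν : Measure (Z × X × Y)),
      ν.map (fun w : Z × X × Y => (w.1, w.2.1)) = μ ⊗ₘ ρX →
      ∫ w, Afun (w.1, w.2.1) ∂ν = ∫ p, Afun p ∂(μ ⊗ₘ ρX) := by
    intro ν hνm
    rw [← hνm, integral_map hpiX.aemeasurable hAm.aestronglyMeasurable]
  have hintvalB : ∀ (ν : Measure (Z × X × Y)),
      ν.map (fun w : Z × X × Y => (w.1, w.2.2)) = μ ⊗ₘ ρY →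
      ∫ w, Bfun (w.1, w.2.2) ∂ν = ∫ p, Bfun p ∂(μ ⊗ₘ ρY) := by
    intro ν hνm
    rw [← hνm, integral_map hpiY.aemeasurable hBm.aestronglyMeasurable]
  have hval_eq : ∫ w, llr Pstar Qm w ∂Pstar = ∫ w, llr Pstar Qm w ∂P := by
    rw [integral_congr_ae hsplitPs, integral_congr_ae hsplitP,
      integral_add hIntA_Ps hIntB_Ps, integral_add hIntA'_P hIntB'_P,
      hintvalA Pstar hPsmX, hintvalA P hmX, hintvalB Pstar hPsmY, hintvalB P hmY]
  -- conclusion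
  have hgibbsD := aux_gibbs hPPs hIntPPs
  have hgibbsPs := aux_gibbs hPsQ hIntPsQ_Ps
  have hmain : ∫ w, llr P Qm w ∂P
      = (∫ w, llr P Pstar w ∂P) + ∫ w, llr Pstar Qm w ∂Pstar := by
    rw [integral_congr_ae hchain, integral_add hIntPPs hIntPsQ_P, hval_eq]
  have hKLP : KL P Qm = ENNReal.ofReal (∫ w, llr P Qm w ∂P) := by
    rw [KL, if_pos ⟨hPQ, hPint⟩]
  have hKLPs : KL Pstar Qm = ENNReal.ofReal (∫ w, llr Pstar Qm w ∂Pstar) := by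
    rw [KL, if_pos ⟨hPsQ, hIntPsQ_Ps⟩]
  constructor
  · rw [hKLP, hKLPs]
    refine ENNReal.ofReal_le_ofReal ?_
    rw [hmain]
    linarith [hgibbsD.1]
  · intro _ heq
    rw [hKLP, hKLPs] at heq
    have hints : ∫ w, llr P Qm w ∂P = ∫ w, llr Pstar Qm w ∂Pstar := by
      refine (ENNReal.ofReal_eq_ofReal_iff ?_ hgibbsPs.1).mp heq
      rw [hmain]
      linarith [hgibbsD.1, hgibbsPs.1]
    have hD0 : ∫ w, llr P Pstar w ∂P = 0 := by
      rw [hmain] at hints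
      linarith
    exact hgibbsD.2 hD0

end Core






section AuxKLMap

variable {A B : Type*} [MeasurableSpace A] [MeasurableSpace B]

example (μ : Measure A) [IsProbabilityMeasure μ] (κ : Kernel A B) [IsMarkovKernel κ] :
  IsProbabilityMeasure (μ ⊗ₘ κ) := inferInstance

lemma aux_KL_map (e : A ≃ᵐ B) (α β : Measure A) [SigmaFinite α] [SigmaFinite β] :
    KL (α.map e) (β.map e) = KL α β := by
  have me := e.measurableEmbedding
  have hac : α.map e ≪ β.map e ↔ α ≪ β := by
    constructor
    · intro h
      have h2 := h.map e.symm.measurable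
      rwa [Measure.map_map e.symm.measurable e.measurable,
        Measure.map_map e.symm.measurable e.measurable,
        MeasurableEquiv.symm_comp_self, Measure.map_id, Measure.map_id] at h2
    · exact fun h => h.map e.measurable
  by_cases hac0 : α ≪ β
  · have hmac : α.map e ≪ β.map e := hac0.map e.measurable
    have hrn := me.rnDeriv_map α β
    have hllr : (fun x => llr (α.map e) (β.map e) (e x)) =ᵐ[α] llr α β := by
      filter_upwards [hac0.ae_le hrn] with x hx
      simp only [llr, hx]
    have hint_iff : Integrable (llr (α.map e) (β.map e)) (α.map e) ↔ Integrable (llr α β) α := by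
      rw [me.integrable_map_iff]
      exact integrable_congr hllr
    have hval : ∫ x, llr (α.map e) (β.map e) x ∂(α.map e) = ∫ x, llr α β x ∂α := by
      rw [integral_map e.measurable.aemeasurable
        (stronglyMeasurable_llr _ _).aestronglyMeasurable]
      exact integral_congr_ae hllr
    by_cases hint : Integrable (llr α β) α
    · rw [KL, KL, if_pos ⟨hmac, hint_iff.mpr hint⟩, if_pos ⟨hac0, hint⟩, hval]
    · rw [KL, KL, if_neg (fun h => hint (hint_iff.mp h.2)), if_neg (fun h => hint h.2)]
  · rw [KL, KL, if_neg (fun h => hac0 (hac.mp h.1)), if_neg (fun h => hac0 h.1)]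

end AuxKLMap

section Glue

variable {X Z Y : Type*} [MeasurableSpace X] [MeasurableSpace Z] [MeasurableSpace Y]

/-- The coordinate permutation `(z, x, y) ↦ (x, z, y)` as a measurable equivalence. -/
def auxEquiv : (Z × X × Y) ≃ᵐ (X × Z × Y) where
  toEquiv := ⟨fun w => (w.2.1, w.1, w.2.2), fun p => (p.2.1, p.1, p.2.2),
    fun w => rfl, fun p => rfl⟩
  measurable_toFun := (measurable_fst.comp measurable_snd).prodMk
    (measurable_fst.prodMk (measurable_snd.comp measurable_snd))
  measurable_invFun := (measurable_fst.comp measurable_snd).prodMk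
    (measurable_fst.prodMk (measurable_snd.comp measurable_snd))

lemma auxEquiv_rep (m : Measure Z) (κ1 : Kernel Z X) (κ2 : Kernel Z Y) :
    condIndepLaw m κ1 κ2 = (m ⊗ₘ (κ1 ×ₖ κ2)).map (auxEquiv : (Z × X × Y) ≃ᵐ (X × Z × Y)) := rfl

end Glue

/-- **Conditional independence minimises KL against a conditionally independent reference.**
Let `Q` be the conditionally independent law built from `q`, `κX`, `κY`, and let `C` be the
set of probability measures on `X × Z × Y` with `Z`-marginal `μ` whose conditional laws of the
`X`- and `Y`-coordinates given the `Z`-coordinate are `ρX` and `ρY` (`μ`-a.e.), i.e. whose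
`(Z, X)`-marginal is `μ ⊗ₘ ρX` and whose `(Z, Y)`-marginal is `μ ⊗ₘ ρY`.  Then the
conditionally independent element `P* = condIndepLaw μ ρX ρY` of `C` satisfies
`KL(P* ‖ Q) ≤ KL(P ‖ Q)` for all `P ∈ C`, and is the unique minimiser when `KL(P* ‖ Q) < ∞`. -/
theorem condIndep_minimises_kl
    {X Z Y : Type*} [MeasurableSpace X] [MeasurableSpace Z] [MeasurableSpace Y]
    [StandardBorelSpace X] [StandardBorelSpace Z] [StandardBorelSpace Y]
    (q : Measure Z) [IsProbabilityMeasure q]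
    (κX : Kernel Z X) (κY : Kernel Z Y) [IsMarkovKernel κX] [IsMarkovKernel κY]
    (μ : Measure Z) [IsProbabilityMeasure μ]
    (ρX : Kernel Z X) (ρY : Kernel Z Y) [IsMarkovKernel ρX] [IsMarkovKernel ρY]
    (C : Set (Measure (X × Z × Y)))
    (hC : C = {P : Measure (X × Z × Y) | IsProbabilityMeasure P ∧
      P.map (fun p => p.2.1) = μ ∧
      P.map (fun p => (p.2.1, p.1)) = μ ⊗ₘ ρX ∧
      P.map (fun p => (p.2.1, p.2.2)) = μ ⊗ₘ ρY}) :
    (∀ P ∈ C, KL (condIndepLaw μ ρX ρY) (condIndepLaw q κX κY) ≤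
        KL P (condIndepLaw q κX κY)) ∧
      (KL (condIndepLaw μ ρX ρY) (condIndepLaw q κX κY) < ∞ →
        ∀ P ∈ C, KL P (condIndepLaw q κX κY) = KL (condIndepLaw μ ρX ρY) (condIndepLaw q κX κY) →
          P = condIndepLaw μ ρX ρY) := by
  subst hC
  set e : (Z × X × Y) ≃ᵐ (X × Z × Y) := auxEquiv with he_def
  have hKLQ : KL (condIndepLaw μ ρX ρY) (condIndepLaw q κX κY)
      = KL (μ ⊗ₘ (ρX ×ₖ ρY)) (q ⊗ₘ (κX ×ₖ κY)) := by
    rw [auxEquiv_rep, auxEquiv_rep]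
    exact aux_KL_map _ _ _
  have key : ∀ P : Measure (X × Z × Y), IsProbabilityMeasure P →
      P.map (fun p => p.2.1) = μ →
      P.map (fun p => (p.2.1, p.1)) = μ ⊗ₘ ρX →
      P.map (fun p => (p.2.1, p.2.2)) = μ ⊗ₘ ρY →
      (KL (condIndepLaw μ ρX ρY) (condIndepLaw q κX κY) ≤ KL P (condIndepLaw q κX κY)) ∧
        (KL (condIndepLaw μ ρX ρY) (condIndepLaw q κX κY) ≠ ∞ →
          KL P (condIndepLaw q κX κY) = KL (condIndepLaw μ ρX ρY) (condIndepLaw q κX κY) →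
          P = condIndepLaw μ ρX ρY) := by
    intro P hprob h1 hX hY
    haveI := hprob
    set P' : Measure (Z × X × Y) := P.map e.symm with hP'def
    haveI : IsProbabilityMeasure P' := Measure.isProbabilityMeasure_map e.symm.measurable.aemeasurable
    have hPrep : P = P'.map e := by
      rw [hP'def, Measure.map_map e.measurable e.symm.measurable,
        MeasurableEquiv.self_comp_symm, Measure.map_id]
    have hP'1 : P'.map Prod.fst = μ := by
      rw [hP'def, Measure.map_map measurable_fst e.symm.measurable]
      exact h1
    have hP'X : P'.map (fun w : Z × X × Y => (w.1, w.2.1)) = μ ⊗ₘ ρX := by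
      rw [hP'def, Measure.map_map
        (show Measurable fun w : Z × X × Y => (w.1, w.2.1) from
          measurable_fst.prodMk (measurable_fst.comp measurable_snd)) e.symm.measurable]
      exact hX
    have hP'Y : P'.map (fun w : Z × X × Y => (w.1, w.2.2)) = μ ⊗ₘ ρY := by
      rw [hP'def, Measure.map_map
        (show Measurable fun w : Z × X × Y => (w.1, w.2.2) from
          measurable_fst.prodMk (measurable_snd.comp measurable_snd)) e.symm.measurable]
      exact hY
    have hcore := aux_core q κX κY μ ρX ρY P' hP'1 hP'X hP'Y
    have hKLP : KL P (condIndepLaw q κX κY) = KL P' (q ⊗ₘ (κX ×ₖ κY)) := by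
      rw [auxEquiv_rep, hPrep]
      exact aux_KL_map _ _ _
    constructor
    · rw [hKLQ, hKLP]
      exact hcore.1
    · intro hfin heq
      rw [hKLP, hKLQ] at heq
      have hfin' : KL (μ ⊗ₘ (ρX ×ₖ ρY)) (q ⊗ₘ (κX ×ₖ κY)) ≠ ∞ := by
        rw [← hKLQ]; exact hfin
      have hP'eq : P' = μ ⊗ₘ (ρX ×ₖ ρY) := hcore.2 hfin' heq
      rw [hPrep, hP'eq, auxEquiv_rep]
  constructor
  · rintro P ⟨hprob, h1, hX, hY⟩
    exact (key P hprob h1 hX hY).1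
  · rintro hfin P ⟨hprob, h1, hX, hY⟩ heq
    exact (key P hprob h1 hX hY).2 hfin.ne heq
end
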